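/- arXiv:1410.7541 — 2 statements merged into one kernel-verified Lean document; each statement's English description precedes it below -/
import Mathlib

section
/- Let A ≥ 1, ν > 0 and let u^{n+1} = (1 - AτΔ)(1 + ντΔ² - AτΔ)^{-1} u^n + τΔΠ_N(1 + ντΔ² - AτΔ)^{-1} f(u^n) with f(u) = u³ - u, u^n ∈ X_N mean-zero. Then ||u^{n+1}||_{Ḣ¹(𝕋²)} ≤ (1 + 1/A + (3/A)||u^n||_∞²) · ||u^n||_{Ḣ¹(𝕋²)}. -/
open MeasureTheory Real

noncomputable section

/-- The periodicity cell `[0,2π]² ⊂ ℝ²`. -/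
def torusBox : Set (ℝ × ℝ) := Set.Icc (0, 0) (2 * Real.pi, 2 * Real.pi)

/-- First partial derivative. -/
def pd1 (u : ℝ × ℝ → ℝ) : ℝ × ℝ → ℝ := fun x => fderiv ℝ u x (1, 0)

/-- Second partial derivative. -/
def pd2 (u : ℝ × ℝ → ℝ) : ℝ × ℝ → ℝ := fun x => fderiv ℝ u x (0, 1)

/-- Laplacian on `ℝ²`. -/
def lap (u : ℝ × ℝ → ℝ) : ℝ × ℝ → ℝ := fun x => pd1 (pd1 u) x + pd2 (pd2 u) x

/-- `u ∈ X_N`: a real trigonometric polynomial with frequencies `|k| ≤ N`. -/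
def IsTrigPoly (N : ℕ) (u : ℝ × ℝ → ℝ) : Prop :=
  ∃ a b : ℤ × ℤ → ℝ,
    (∀ k : ℤ × ℤ, ((N : ℝ)) ^ 2 < (k.1 : ℝ) ^ 2 + (k.2 : ℝ) ^ 2 → a k = 0 ∧ b k = 0) ∧
    ∀ x : ℝ × ℝ, u x = ∑ k ∈ Finset.Icc (-(N : ℤ), -(N : ℤ)) ((N : ℤ), (N : ℤ)),
      (a k * Real.cos ((k.1 : ℝ) * x.1 + (k.2 : ℝ) * x.2) +
       b k * Real.sin ((k.1 : ℝ) * x.1 + (k.2 : ℝ) * x.2))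

/-- Square of the `L²(𝕋²)` norm. -/
def L2sq (u : ℝ × ℝ → ℝ) : ℝ := ∫ x in torusBox, (u x) ^ 2

/-- `L^∞` norm. -/
def Linf (u : ℝ × ℝ → ℝ) : ℝ := ⨆ x : ℝ × ℝ, |u x|

/-- The Cahn–Hilliard energy `E(u) = ∫ (ν/2)|∇u|² + (1/4)(u²-1)²`. -/
def ECH (ν : ℝ) (u : ℝ × ℝ → ℝ) : ℝ :=
  ∫ x in torusBox, (ν / 2 * ((pd1 u x) ^ 2 + (pd2 u x) ^ 2) +
    (1 / 4) * ((u x) ^ 2 - 1) ^ 2)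

/-- Square of the `Ḣ¹(𝕋²)` norm, `∫ |∇u|²`. -/
def H1sq (u : ℝ × ℝ → ℝ) : ℝ := ∫ x in torusBox, ((pd1 u x) ^ 2 + (pd2 u x) ^ 2)


/-- frequency box -/
def KK (N : ℕ) : Finset (ℤ × ℤ) := Finset.Icc (-(N : ℤ), -(N : ℤ)) ((N : ℤ), (N : ℤ))

/-- phase -/
def ph (k : ℤ × ℤ) (x : ℝ × ℝ) : ℝ := (k.1 : ℝ) * x.1 + (k.2 : ℝ) * x.2

/-- trig polynomial synthesis -/
def TP (N : ℕ) (a b : ℤ × ℤ → ℝ) : ℝ × ℝ → ℝ := fun x =>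
  ∑ k ∈ KK N, (a k * Real.cos (ph k x) + b k * Real.sin (ph k x))

lemma mem_KK_neg {N : ℕ} {k : ℤ × ℤ} (h : k ∈ KK N) : -k ∈ KK N := by
  simp only [KK, Finset.mem_Icc, Prod.le_def, Prod.fst_neg, Prod.snd_neg] at *
  omega

/-- the linear functional for the phase -/
def phL (k : ℤ × ℤ) : (ℝ × ℝ) →L[ℝ] ℝ :=
  (k.1 : ℝ) • (ContinuousLinearMap.fst ℝ ℝ ℝ) + (k.2 : ℝ) • (ContinuousLinearMap.snd ℝ ℝ ℝ)

lemma phL_apply (k : ℤ × ℤ) (x : ℝ × ℝ) : phL k x = ph k x := by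
  simp [phL, ph, smul_eq_mul]

lemma hasFDerivAt_TP (N : ℕ) (a b : ℤ × ℤ → ℝ) (x : ℝ × ℝ) :
    HasFDerivAt (TP N a b)
      (∑ k ∈ KK N, ((- a k * Real.sin (ph k x) + b k * Real.cos (ph k x)) • phL k)) x := by
  apply HasFDerivAt.fun_sum
  intro k _
  have h1 : HasFDerivAt (fun y => ph k y) (phL k) x := by
    have heq : ⇑(phL k) = fun y => ph k y := funext (phL_apply k)
    have := (phL k).hasFDerivAt (x := x)
    rwa [heq] at this
  have hc : HasFDerivAt (fun y => Real.cos (ph k y)) ((-Real.sin (ph k x)) • phL k) x :=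
    (Real.hasDerivAt_cos (ph k x)).comp_hasFDerivAt x h1
  have hs : HasFDerivAt (fun y => Real.sin (ph k y)) ((Real.cos (ph k x)) • phL k) x :=
    (Real.hasDerivAt_sin (ph k x)).comp_hasFDerivAt x h1
  have := (hc.const_mul (a k)).add (hs.const_mul (b k))
  refine this.congr_fderiv ?_
  module

lemma pd1_TP (N : ℕ) (a b : ℤ × ℤ → ℝ) :
    pd1 (TP N a b) = TP N (fun k => (k.1 : ℝ) * b k) (fun k => -(k.1 : ℝ) * a k) := by
  funext x
  have h := (hasFDerivAt_TP N a b x).fderiv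
  simp only [pd1, h, TP]
  rw [ContinuousLinearMap.sum_apply]
  apply Finset.sum_congr rfl
  intro k _
  simp [phL, smul_eq_mul]
  ring

lemma pd2_TP (N : ℕ) (a b : ℤ × ℤ → ℝ) :
    pd2 (TP N a b) = TP N (fun k => (k.2 : ℝ) * b k) (fun k => -(k.2 : ℝ) * a k) := by
  funext x
  have h := (hasFDerivAt_TP N a b x).fderiv
  simp only [pd2, h, TP]
  rw [ContinuousLinearMap.sum_apply]
  apply Finset.sum_congr rfl
  intro k _
  simp [phL, smul_eq_mul]
  ring

lemma TP_congr (N : ℕ) {a b a' b' : ℤ × ℤ → ℝ} (ha : ∀ k, a k = a' k) (hb : ∀ k, b k = b' k) :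
    TP N a b = TP N a' b' := by
  funext x; unfold TP; exact Finset.sum_congr rfl fun k _ => by rw [ha, hb]

lemma lap_TP (N : ℕ) (a b : ℤ × ℤ → ℝ) :
    lap (TP N a b) = TP N (fun k => -(((k.1:ℝ)^2 + (k.2:ℝ)^2)) * a k)
      (fun k => -(((k.1:ℝ)^2 + (k.2:ℝ)^2)) * b k) := by
  funext x
  simp only [lap, pd1_TP, pd2_TP]
  unfold TP
  rw [← Finset.sum_add_distrib]
  apply Finset.sum_congr rfl
  intro k _
  ring

lemma continuous_TP (N : ℕ) (a b : ℤ × ℤ → ℝ) : Continuous (TP N a b) := by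
  apply continuous_finset_sum
  intro k _
  have hph : Continuous (ph k) := by
    simpa [funext (phL_apply k)] using (phL k).continuous
  exact ((continuous_const.mul (Real.continuous_cos.comp hph)).add
    (continuous_const.mul (Real.continuous_sin.comp hph)))

lemma differentiable_TP (N : ℕ) (a b : ℤ × ℤ → ℝ) : Differentiable ℝ (TP N a b) :=
  fun x => (hasFDerivAt_TP N a b x).differentiableAt

lemma TP_sub (N : ℕ) (a b c d : ℤ × ℤ → ℝ) (x : ℝ × ℝ) :
    TP N a b x - TP N c d x = TP N (a - c) (b - d) x := by
  unfold TP
  rw [← Finset.sum_sub_distrib]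
  apply Finset.sum_congr rfl
  intro k _; simp [Pi.sub_apply]; ring


lemma torusBox_eq : torusBox = Set.Icc 0 (2*π) ×ˢ Set.Icc 0 (2*π) := by
  rw [torusBox, ← Set.Icc_prod_Icc]

/-- 1D integral of cos(n t + c) over [0, 2π] -/
lemma int1_cos (n : ℤ) (c : ℝ) :
    ∫ t in Set.Icc (0:ℝ) (2*π), Real.cos ((n:ℝ) * t + c) =
      if n = 0 then 2*π * Real.cos c else 0 := by
  rw [MeasureTheory.integral_Icc_eq_integral_Ioc,
    ← intervalIntegral.integral_of_le (by positivity : (0:ℝ) ≤ 2*π)]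
  by_cases hn : n = 0
  · simp [hn]
  · simp only [hn, if_false]
    have hd : ∀ t ∈ Set.uIcc (0:ℝ) (2*π), HasDerivAt (fun t => Real.sin ((n:ℝ)*t+c)/(n:ℝ))
        (Real.cos ((n:ℝ)*t+c)) t := by
      intro t _
      have h := ((Real.hasDerivAt_sin ((n:ℝ)*t+c)).comp t
        (((hasDerivAt_id t).const_mul (n:ℝ)).add_const c))
      have := h.div_const (n:ℝ)
      refine this.congr_deriv ?_
      have : (n:ℝ) ≠ 0 := by exact_mod_cast hn
      field_simp
    rw [intervalIntegral.integral_eq_sub_of_hasDerivAt hd (by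
      apply Continuous.intervalIntegrable; continuity)]
    have : (n:ℝ)*(2*π)+c = c + (n:ℝ)*(2*π) := by ring
    rw [this, Real.sin_add_int_mul_two_pi]
    simp

lemma int1_sin (n : ℤ) (c : ℝ) :
    ∫ t in Set.Icc (0:ℝ) (2*π), Real.sin ((n:ℝ) * t + c) =
      if n = 0 then 2*π * Real.sin c else 0 := by
  rw [MeasureTheory.integral_Icc_eq_integral_Ioc,
    ← intervalIntegral.integral_of_le (by positivity : (0:ℝ) ≤ 2*π)]
  by_cases hn : n = 0
  · simp [hn]
  · simp only [hn, if_false]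
    have hd : ∀ t ∈ Set.uIcc (0:ℝ) (2*π), HasDerivAt (fun t => -Real.cos ((n:ℝ)*t+c)/(n:ℝ))
        (Real.sin ((n:ℝ)*t+c)) t := by
      intro t _
      have h := ((Real.hasDerivAt_cos ((n:ℝ)*t+c)).comp t
        (((hasDerivAt_id t).const_mul (n:ℝ)).add_const c))
      have := (h.neg).div_const (n:ℝ)
      refine this.congr_deriv ?_
      have : (n:ℝ) ≠ 0 := by exact_mod_cast hn
      field_simp
    rw [intervalIntegral.integral_eq_sub_of_hasDerivAt hd (by
      apply Continuous.intervalIntegrable; continuity)]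
    have : (n:ℝ)*(2*π)+c = c + (n:ℝ)*(2*π) := by ring
    rw [this, Real.cos_add_int_mul_two_pi]
    ring

lemma continuous_ph (m : ℤ × ℤ) : Continuous (ph m) := by
  unfold ph
  exact (continuous_const.mul continuous_fst).add (continuous_const.mul continuous_snd)

/-- Fubini on the box for continuous functions -/
lemma box_integral_of_continuous (f : ℝ × ℝ → ℝ) (hf : Continuous f) :
    ∫ x in torusBox, f x = ∫ x1 in Set.Icc (0:ℝ) (2*π), ∫ x2 in Set.Icc (0:ℝ) (2*π), f (x1, x2) := by
  rw [torusBox_eq]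
  have : (volume : Measure (ℝ×ℝ)) = (volume : Measure ℝ).prod volume := rfl
  rw [this]
  exact MeasureTheory.setIntegral_prod f
    (hf.continuousOn.integrableOn_compact (isCompact_Icc.prod isCompact_Icc))

lemma int_cos_box (m : ℤ × ℤ) :
    ∫ x in torusBox, Real.cos (ph m x) = if m = 0 then 4*π^2 else 0 := by
  rw [box_integral_of_continuous _ (by exact Real.continuous_cos.comp (continuous_ph m))]
  have inner : ∀ x1 : ℝ, ∫ x2 in Set.Icc (0:ℝ) (2*π), Real.cos (ph m (x1, x2)) =
      if m.2 = 0 then 2*π*Real.cos ((m.1:ℝ)*x1) else 0 := by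
    intro x1
    have : ∀ x2 : ℝ, ph m (x1, x2) = (m.2:ℝ)*x2 + (m.1:ℝ)*x1 := by
      intro x2; simp [ph]; ring
    simp_rw [this]
    exact int1_cos m.2 ((m.1:ℝ)*x1)
  simp_rw [inner]
  by_cases h2 : m.2 = 0
  · simp only [h2, if_true]
    rw [MeasureTheory.integral_const_mul]
    have : ∀ x1 : ℝ, Real.cos ((m.1:ℝ)*x1) = Real.cos ((m.1:ℝ)*x1 + 0) := by simp
    simp_rw [this, int1_cos m.1 0]
    by_cases h1 : m.1 = 0
    · have hm : m = 0 := Prod.ext h1 h2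
      simp [h1, hm]
      ring
    · have hm : ¬ (m = 0) := fun h => h1 (by rw [h]; rfl)
      simp [h1, hm]
  · have hm : ¬ (m = 0) := fun h => h2 (by rw [h]; rfl)
    simp [h2, hm]

lemma int_sin_box (m : ℤ × ℤ) : ∫ x in torusBox, Real.sin (ph m x) = 0 := by
  rw [box_integral_of_continuous _ (by exact Real.continuous_sin.comp (continuous_ph m))]
  have inner : ∀ x1 : ℝ, ∫ x2 in Set.Icc (0:ℝ) (2*π), Real.sin (ph m (x1, x2)) =
      if m.2 = 0 then 2*π*Real.sin ((m.1:ℝ)*x1) else 0 := by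
    intro x1
    have : ∀ x2 : ℝ, ph m (x1, x2) = (m.2:ℝ)*x2 + (m.1:ℝ)*x1 := by
      intro x2; simp [ph]; ring
    simp_rw [this]
    exact int1_sin m.2 ((m.1:ℝ)*x1)
  simp_rw [inner]
  by_cases h2 : m.2 = 0
  · simp only [h2, if_true]
    rw [MeasureTheory.integral_const_mul]
    have : ∀ x1 : ℝ, Real.sin ((m.1:ℝ)*x1) = Real.sin ((m.1:ℝ)*x1 + 0) := by simp
    simp_rw [this, int1_sin m.1 0]
    simp
  · simp [h2]


lemma ph_add (k l : ℤ × ℤ) (x : ℝ × ℝ) : ph (k + l) x = ph k x + ph l x := by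
  simp [ph]; push_cast; ring

lemma ph_sub (k l : ℤ × ℤ) (x : ℝ × ℝ) : ph (k - l) x = ph k x - ph l x := by
  simp [ph]; push_cast; ring

lemma integrableOn_box {f : ℝ × ℝ → ℝ} (hf : Continuous f) : IntegrableOn f torusBox :=
  hf.continuousOn.integrableOn_compact isCompact_Icc

/-- shorthand for the box delta -/
def Jm (m : ℤ × ℤ) : ℝ := if m = 0 then 4*π^2 else 0

lemma int_cos_box' (m : ℤ × ℤ) : ∫ x in torusBox, Real.cos (ph m x) = Jm m := int_cos_box m

lemma intCC (k l : ℤ × ℤ) :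
    ∫ x in torusBox, Real.cos (ph k x) * Real.cos (ph l x) = (Jm (k-l) + Jm (k+l))/2 := by
  have hpt : ∀ x : ℝ × ℝ, Real.cos (ph k x) * Real.cos (ph l x) =
      (Real.cos (ph (k-l) x) + Real.cos (ph (k+l) x))/2 := by
    intro x
    rw [ph_sub, ph_add, Real.cos_sub, Real.cos_add]
    ring
  simp_rw [hpt]
  rw [integral_div, MeasureTheory.integral_add
    (integrableOn_box (by exact Real.continuous_cos.comp (continuous_ph _)))
    (integrableOn_box (by exact Real.continuous_cos.comp (continuous_ph _))),
    int_cos_box', int_cos_box']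

lemma intSS (k l : ℤ × ℤ) :
    ∫ x in torusBox, Real.sin (ph k x) * Real.sin (ph l x) = (Jm (k-l) - Jm (k+l))/2 := by
  have hpt : ∀ x : ℝ × ℝ, Real.sin (ph k x) * Real.sin (ph l x) =
      (Real.cos (ph (k-l) x) - Real.cos (ph (k+l) x))/2 := by
    intro x
    rw [ph_sub, ph_add, Real.cos_sub, Real.cos_add]
    ring
  simp_rw [hpt]
  rw [integral_div, MeasureTheory.integral_sub
    (integrableOn_box (by exact Real.continuous_cos.comp (continuous_ph _)))
    (integrableOn_box (by exact Real.continuous_cos.comp (continuous_ph _))),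
    int_cos_box', int_cos_box']

lemma intSC (k l : ℤ × ℤ) :
    ∫ x in torusBox, Real.sin (ph k x) * Real.cos (ph l x) = 0 := by
  have hpt : ∀ x : ℝ × ℝ, Real.sin (ph k x) * Real.cos (ph l x) =
      (Real.sin (ph (k+l) x) + Real.sin (ph (k-l) x))/2 := by
    intro x
    rw [ph_sub, ph_add, Real.sin_add, Real.sin_sub]
    ring
  simp_rw [hpt]
  rw [integral_div, MeasureTheory.integral_add
    (integrableOn_box (by exact Real.continuous_sin.comp (continuous_ph _)))
    (integrableOn_box (by exact Real.continuous_sin.comp (continuous_ph _))),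
    int_sin_box, int_sin_box]
  norm_num

lemma Jm_sub_eq (l k : ℤ × ℤ) : Jm (l - k) = if l = k then 4*π^2 else 0 := by
  unfold Jm
  congr 1
  simp [sub_eq_zero]

lemma Jm_add_eq (l k : ℤ × ℤ) : Jm (l + k) = if l = -k then 4*π^2 else 0 := by
  unfold Jm
  congr 1
  simp [add_eq_zero_iff_eq_neg]

/-- coefficient extraction against cosine -/
lemma coefA_TP {N : ℕ} (a b : ℤ × ℤ → ℝ) {k : ℤ × ℤ} (hk : k ∈ KK N) :
    ∫ x in torusBox, TP N a b x * Real.cos (ph k x) = 2*π^2 * (a k + a (-k)) := by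
  have hpt : ∀ x : ℝ × ℝ, TP N a b x * Real.cos (ph k x) =
      ∑ l ∈ KK N, (a l * (Real.cos (ph l x) * Real.cos (ph k x)) +
        b l * (Real.sin (ph l x) * Real.cos (ph k x))) := by
    intro x
    rw [TP, Finset.sum_mul]
    exact Finset.sum_congr rfl fun l _ => by ring
  simp_rw [hpt]
  rw [MeasureTheory.integral_finset_sum]
  swap
  · intro l _
    apply integrableOn_box
    apply Continuous.add
    · exact continuous_const.mul ((Real.continuous_cos.comp (continuous_ph _)).mul
        (Real.continuous_cos.comp (continuous_ph _)))
    · exact continuous_const.mul ((Real.continuous_sin.comp (continuous_ph _)).mul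
        (Real.continuous_cos.comp (continuous_ph _)))
  have hterm : ∀ l ∈ KK N, (∫ x in torusBox,
      (a l * (Real.cos (ph l x) * Real.cos (ph k x)) +
       b l * (Real.sin (ph l x) * Real.cos (ph k x)))) =
      (if l = k then 2*π^2 * a l else 0) + (if l = -k then 2*π^2 * a l else 0) := by
    intro l _
    have c1 : Continuous fun x => Real.cos (ph l x) * Real.cos (ph k x) :=
      (Real.continuous_cos.comp (continuous_ph _)).mul
        (Real.continuous_cos.comp (continuous_ph _))
    have c2 : Continuous fun x => Real.sin (ph l x) * Real.cos (ph k x) :=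
      (Real.continuous_sin.comp (continuous_ph _)).mul
        (Real.continuous_cos.comp (continuous_ph _))
    rw [MeasureTheory.integral_add ((integrableOn_box c1).const_mul _)
      ((integrableOn_box c2).const_mul _),
      MeasureTheory.integral_const_mul, MeasureTheory.integral_const_mul, intCC, intSC,
      Jm_sub_eq, Jm_add_eq]
    split_ifs <;> ring
  rw [Finset.sum_congr rfl hterm, Finset.sum_add_distrib,
    Finset.sum_ite_eq' (KK N) k (fun l => 2*π^2 * a l),
    Finset.sum_ite_eq' (KK N) (-k) (fun l => 2*π^2 * a l)]
  rw [if_pos hk, if_pos (mem_KK_neg hk)]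
  ring

/-- coefficient extraction against sine -/
lemma coefB_TP {N : ℕ} (a b : ℤ × ℤ → ℝ) {k : ℤ × ℤ} (hk : k ∈ KK N) :
    ∫ x in torusBox, TP N a b x * Real.sin (ph k x) = 2*π^2 * (b k - b (-k)) := by
  have hpt : ∀ x : ℝ × ℝ, TP N a b x * Real.sin (ph k x) =
      ∑ l ∈ KK N, (a l * (Real.sin (ph k x) * Real.cos (ph l x)) +
        b l * (Real.sin (ph l x) * Real.sin (ph k x))) := by
    intro x
    rw [TP, Finset.sum_mul]
    exact Finset.sum_congr rfl fun l _ => by ring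
  simp_rw [hpt]
  rw [MeasureTheory.integral_finset_sum]
  swap
  · intro l _
    apply integrableOn_box
    apply Continuous.add
    · exact continuous_const.mul ((Real.continuous_sin.comp (continuous_ph _)).mul
        (Real.continuous_cos.comp (continuous_ph _)))
    · exact continuous_const.mul ((Real.continuous_sin.comp (continuous_ph _)).mul
        (Real.continuous_sin.comp (continuous_ph _)))
  have hterm : ∀ l ∈ KK N, (∫ x in torusBox,
      (a l * (Real.sin (ph k x) * Real.cos (ph l x)) +
       b l * (Real.sin (ph l x) * Real.sin (ph k x)))) =
      (if l = k then 2*π^2 * b l else 0) + (if l = -k then -(2*π^2 * b l) else 0) := by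
    intro l _
    have c1 : Continuous fun x => Real.sin (ph k x) * Real.cos (ph l x) :=
      (Real.continuous_sin.comp (continuous_ph _)).mul
        (Real.continuous_cos.comp (continuous_ph _))
    have c2 : Continuous fun x => Real.sin (ph l x) * Real.sin (ph k x) :=
      (Real.continuous_sin.comp (continuous_ph _)).mul
        (Real.continuous_sin.comp (continuous_ph _))
    rw [MeasureTheory.integral_add ((integrableOn_box c1).const_mul _)
      ((integrableOn_box c2).const_mul _),
      MeasureTheory.integral_const_mul, MeasureTheory.integral_const_mul, intSC, intSS,
      Jm_sub_eq, Jm_add_eq]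
    split_ifs <;> ring
  rw [Finset.sum_congr rfl hterm, Finset.sum_add_distrib,
    Finset.sum_ite_eq' (KK N) k (fun l => 2*π^2 * b l),
    Finset.sum_ite_eq' (KK N) (-k) (fun l => -(2*π^2 * b l))]
  rw [if_pos hk, if_pos (mem_KK_neg hk)]
  ring

lemma sum_KK_neg (N : ℕ) (F : ℤ × ℤ → ℝ) :
    ∑ k ∈ KK N, F (-k) = ∑ k ∈ KK N, F k := by
  apply Finset.sum_nbij' (i := fun k => -k) (j := fun k => -k) <;>
    intros <;> simp_all [mem_KK_neg]

lemma int_TP_mul (N : ℕ) (a b c d : ℤ × ℤ → ℝ) :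
    ∫ x in torusBox, TP N a b x * TP N c d x =
      2*π^2 * ∑ k ∈ KK N, (a k * (c k + c (-k)) + b k * (d k - d (-k))) := by
  have hpt : ∀ x : ℝ × ℝ, TP N a b x * TP N c d x =
      ∑ k ∈ KK N, (a k * (TP N c d x * Real.cos (ph k x)) +
        b k * (TP N c d x * Real.sin (ph k x))) := by
    intro x
    rw [TP, Finset.sum_mul]
    exact Finset.sum_congr rfl fun l _ => by ring
  simp_rw [hpt]
  rw [MeasureTheory.integral_finset_sum]
  swap
  · intro l _
    apply integrableOn_box
    apply Continuous.add
    · exact continuous_const.mul ((continuous_TP N c d).mul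
        (Real.continuous_cos.comp (continuous_ph _)))
    · exact continuous_const.mul ((continuous_TP N c d).mul
        (Real.continuous_sin.comp (continuous_ph _)))
  have hterm : ∀ l ∈ KK N, (∫ x in torusBox,
      (a l * (TP N c d x * Real.cos (ph l x)) + b l * (TP N c d x * Real.sin (ph l x)))) =
      2*π^2 * (a l * (c l + c (-l)) + b l * (d l - d (-l))) := by
    intro l hl
    have i1 : IntegrableOn (fun x => TP N c d x * Real.cos (ph l x)) torusBox :=
      integrableOn_box ((continuous_TP N c d).mul (Real.continuous_cos.comp (continuous_ph _)))
    have i2 : IntegrableOn (fun x => TP N c d x * Real.sin (ph l x)) torusBox :=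
      integrableOn_box ((continuous_TP N c d).mul (Real.continuous_sin.comp (continuous_ph _)))
    rw [MeasureTheory.integral_add (i1.const_mul _) (i2.const_mul _),
      MeasureTheory.integral_const_mul, MeasureTheory.integral_const_mul,
      coefA_TP c d hl, coefB_TP c d hl]
    ring
  rw [Finset.sum_congr rfl hterm, ← Finset.mul_sum]

lemma int_TP_mul_sym (N : ℕ) (a b c d : ℤ × ℤ → ℝ) :
    ∫ x in torusBox, TP N a b x * TP N c d x =
      π^2 * ∑ k ∈ KK N, ((a k + a (-k)) * (c k + c (-k)) + (b k - b (-k)) * (d k - d (-k))) := by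
  rw [int_TP_mul]
  have h2 : ∑ k ∈ KK N, ((a k + a (-k)) * (c k + c (-k)) + (b k - b (-k)) * (d k - d (-k))) =
      (∑ k ∈ KK N, (a k * (c k + c (-k)) + b k * (d k - d (-k)))) +
      (∑ k ∈ KK N, (a (-k) * (c k + c (-k)) + (- b (-k)) * (d k - d (-k)))) := by
    rw [← Finset.sum_add_distrib]
    exact Finset.sum_congr rfl fun k _ => by ring
  have h3 : ∑ k ∈ KK N, (a (-k) * (c k + c (-k)) + (- b (-k)) * (d k - d (-k))) =
      ∑ k ∈ KK N, (a k * (c k + c (-k)) + b k * (d k - d (-k))) := by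
    rw [← sum_KK_neg N (fun k => a k * (c k + c (-k)) + b k * (d k - d (-k)))]
    exact Finset.sum_congr rfl fun k _ => by rw [neg_neg]; ring
  rw [h2, h3]
  ring

/-- weight |k|^2 -/
def wt (k : ℤ × ℤ) : ℝ := (k.1 : ℝ)^2 + (k.2 : ℝ)^2

lemma wt_nonneg (k : ℤ × ℤ) : 0 ≤ wt k := by unfold wt; positivity

lemma wt_neg (k : ℤ × ℤ) : wt (-k) = wt k := by
  unfold wt; simp [Prod.fst_neg, Prod.snd_neg]

/-- squared L2 norm of gradient in coefficients -/
lemma H1sq_TP (N : ℕ) (a b : ℤ × ℤ → ℝ) :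
    H1sq (TP N a b) =
      π^2 * ∑ k ∈ KK N, wt k * ((a k + a (-k))^2 + (b k - b (-k))^2) := by
  unfold H1sq
  rw [pd1_TP, pd2_TP]
  set a1 := fun k : ℤ×ℤ => (k.1:ℝ) * b k with ha1
  set b1 := fun k : ℤ×ℤ => -(k.1:ℝ) * a k with hb1
  set a2 := fun k : ℤ×ℤ => (k.2:ℝ) * b k with ha2
  set b2 := fun k : ℤ×ℤ => -(k.2:ℝ) * a k with hb2
  have hsplit : ∫ x in torusBox, ((TP N a1 b1 x)^2 + (TP N a2 b2 x)^2) =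
      (∫ x in torusBox, TP N a1 b1 x * TP N a1 b1 x) +
      ∫ x in torusBox, TP N a2 b2 x * TP N a2 b2 x := by
    simp_rw [← sq]
    exact MeasureTheory.integral_add
      (integrableOn_box (by exact (continuous_TP _ _ _).pow 2))
      (integrableOn_box (by exact (continuous_TP _ _ _).pow 2))
  rw [hsplit, int_TP_mul_sym, int_TP_mul_sym, ← mul_add, ← Finset.sum_add_distrib]
  congr 1
  apply Finset.sum_congr rfl
  intro k _
  simp only [ha1, hb1, ha2, hb2, Prod.fst_neg, Prod.snd_neg, Int.cast_neg, wt]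
  ring


-- ---------- periodicity ----------
lemma ph_per1 (k : ℤ × ℤ) (x : ℝ × ℝ) : ph k (x.1 + 2*π, x.2) = ph k x + (k.1 : ℤ) * (2*π) := by
  simp [ph]; ring

lemma ph_per2 (k : ℤ × ℤ) (x : ℝ × ℝ) : ph k (x.1, x.2 + 2*π) = ph k x + (k.2 : ℤ) * (2*π) := by
  simp [ph]; ring

lemma TP_per1 (N : ℕ) (a b : ℤ × ℤ → ℝ) (x : ℝ × ℝ) :
    TP N a b (x.1 + 2*π, x.2) = TP N a b x := by
  unfold TP
  apply Finset.sum_congr rfl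
  intro k _
  rw [ph_per1, Real.cos_add_int_mul_two_pi, Real.sin_add_int_mul_two_pi]

lemma TP_per2 (N : ℕ) (a b : ℤ × ℤ → ℝ) (x : ℝ × ℝ) :
    TP N a b (x.1, x.2 + 2*π) = TP N a b x := by
  unfold TP
  apply Finset.sum_congr rfl
  intro k _
  rw [ph_per2, Real.cos_add_int_mul_two_pi, Real.sin_add_int_mul_two_pi]

-- ---------- Fubini with swapped order ----------
lemma box_integral_swap (f : ℝ × ℝ → ℝ) (hf : Continuous f) :
    ∫ x in torusBox, f x =
      ∫ x2 in Set.Icc (0:ℝ) (2*π), ∫ x1 in Set.Icc (0:ℝ) (2*π), f (x1, x2) := by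
  have hswap : ∫ x in torusBox, f x = ∫ x in torusBox, f (Prod.swap x) := by
    rw [torusBox_eq]
    have hvol : (volume : Measure (ℝ×ℝ)) = (volume : Measure ℝ).prod volume := rfl
    rw [hvol, ← Measure.prod_restrict, ← MeasureTheory.integral_prod_swap f,
      Measure.prod_restrict]
  rw [hswap, torusBox_eq]
  have hvol : (volume : Measure (ℝ×ℝ)) = (volume : Measure ℝ).prod volume := rfl
  rw [hvol]
  exact MeasureTheory.setIntegral_prod (fun z => f (Prod.swap z))
    ((hf.comp continuous_swap).continuousOn.integrableOn_compact (isCompact_Icc.prod isCompact_Icc))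

-- ---------- integral of a pd1/pd2 of a periodic function over the box vanishes ----------
lemma int_pd1_eq_zero (g : ℝ × ℝ → ℝ) (g' : ℝ × ℝ → ((ℝ × ℝ) →L[ℝ] ℝ))
    (hg : ∀ x, HasFDerivAt g (g' x) x)
    (h1 : Continuous fun x => g' x (1, 0))
    (hper : ∀ x : ℝ × ℝ, g (x.1 + 2*π, x.2) = g x) :
    ∫ x in torusBox, g' x (1, 0) = 0 := by
  rw [box_integral_swap _ h1]
  have inner : ∀ x2 : ℝ, ∫ x1 in Set.Icc (0:ℝ) (2*π), g' (x1, x2) (1, 0) = 0 := by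
    intro x2
    have hd : ∀ t ∈ Set.uIcc (0:ℝ) (2*π), HasDerivAt (fun s => g (s, x2)) (g' (t, x2) (1, 0)) t := by
      intro t _
      have hcurve : HasDerivAt (fun s : ℝ => (s, x2)) ((1:ℝ), (0:ℝ)) t :=
        (hasDerivAt_id t).prodMk (hasDerivAt_const t x2)
      exact (hg (t, x2)).comp_hasDerivAt t hcurve
    rw [MeasureTheory.integral_Icc_eq_integral_Ioc,
      ← intervalIntegral.integral_of_le (by positivity : (0:ℝ) ≤ 2*π),
      intervalIntegral.integral_eq_sub_of_hasDerivAt hd (by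
        apply Continuous.intervalIntegrable
        exact h1.comp (continuous_id.prodMk continuous_const))]
    have := hper (0, x2)
    simp only [zero_add] at this
    rw [this, sub_self]
  simp_rw [inner]
  simp

lemma int_pd2_eq_zero (g : ℝ × ℝ → ℝ) (g' : ℝ × ℝ → ((ℝ × ℝ) →L[ℝ] ℝ))
    (hg : ∀ x, HasFDerivAt g (g' x) x)
    (h2 : Continuous fun x => g' x (0, 1))
    (hper : ∀ x : ℝ × ℝ, g (x.1, x.2 + 2*π) = g x) :
    ∫ x in torusBox, g' x (0, 1) = 0 := by
  rw [box_integral_of_continuous _ h2]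
  have inner : ∀ x1 : ℝ, ∫ x2 in Set.Icc (0:ℝ) (2*π), g' (x1, x2) (0, 1) = 0 := by
    intro x1
    have hd : ∀ t ∈ Set.uIcc (0:ℝ) (2*π), HasDerivAt (fun s => g (x1, s)) (g' (x1, t) (0, 1)) t := by
      intro t _
      have hcurve : HasDerivAt (fun s : ℝ => (x1, s)) ((0:ℝ), (1:ℝ)) t :=
        (hasDerivAt_const t x1).prodMk (hasDerivAt_id t)
      exact (hg (x1, t)).comp_hasDerivAt t hcurve
    rw [MeasureTheory.integral_Icc_eq_integral_Ioc,
      ← intervalIntegral.integral_of_le (by positivity : (0:ℝ) ≤ 2*π),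
      intervalIntegral.integral_eq_sub_of_hasDerivAt hd (by
        apply Continuous.intervalIntegrable
        exact h2.comp (continuous_const.prodMk continuous_id))]
    have := hper (x1, 0)
    simp only [zero_add] at this
    rw [this, sub_self]
  simp_rw [inner]
  simp

-- ---------- Cauchy-Schwarz for integrals, two components ----------
lemma integral_CS2 (f1 f2 g1 g2 : ℝ × ℝ → ℝ) (hf1 : Continuous f1) (hf2 : Continuous f2)
    (hg1 : Continuous g1) (hg2 : Continuous g2) :
    ∫ x in torusBox, (f1 x * g1 x + f2 x * g2 x) ≤
      Real.sqrt (∫ x in torusBox, ((f1 x)^2 + (f2 x)^2)) *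
      Real.sqrt (∫ x in torusBox, ((g1 x)^2 + (g2 x)^2)) := by
  set Amt := ∫ x in torusBox, ((f1 x)^2 + (f2 x)^2) with hA
  set Bmt := ∫ x in torusBox, ((g1 x)^2 + (g2 x)^2) with hB
  set Cmt := ∫ x in torusBox, (f1 x * g1 x + f2 x * g2 x) with hC
  have hAnn : 0 ≤ Amt := setIntegral_nonneg measurableSet_Icc (fun x _ => by positivity)
  have hBnn : 0 ≤ Bmt := setIntegral_nonneg measurableSet_Icc (fun x _ => by positivity)
  have hquad : ∀ t : ℝ, 0 ≤ Bmt * (t * t) + (-2*Cmt) * t + Amt := by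
    intro t
    have hnn : 0 ≤ ∫ x in torusBox, ((t * g1 x - f1 x)^2 + (t * g2 x - f2 x)^2) :=
      setIntegral_nonneg measurableSet_Icc (fun x _ => by positivity)
    have hexp : ∫ x in torusBox, ((t * g1 x - f1 x)^2 + (t * g2 x - f2 x)^2) =
        Bmt * (t * t) + (-2*Cmt) * t + Amt := by
      have hpt : ∀ x : ℝ × ℝ, ((t * g1 x - f1 x)^2 + (t * g2 x - f2 x)^2) =
          (t*t) * ((g1 x)^2 + (g2 x)^2) + (-2*t) * (f1 x * g1 x + f2 x * g2 x) +
          ((f1 x)^2 + (f2 x)^2) := by intro x; ring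
      simp_rw [hpt]
      have i1 : IntegrableOn (fun x => (g1 x)^2 + (g2 x)^2) torusBox :=
        integrableOn_box ((hg1.pow 2).add (hg2.pow 2))
      have i2 : IntegrableOn (fun x => f1 x * g1 x + f2 x * g2 x) torusBox :=
        integrableOn_box ((hf1.mul hg1).add (hf2.mul hg2))
      have i3 : IntegrableOn (fun x => (f1 x)^2 + (f2 x)^2) torusBox :=
        integrableOn_box ((hf1.pow 2).add (hf2.pow 2))
      have eA : (∫ x in torusBox, (t*t * ((g1 x)^2 + (g2 x)^2) +
          (-2*t) * (f1 x * g1 x + f2 x * g2 x) + ((f1 x)^2 + (f2 x)^2))) =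
          (∫ x in torusBox, (t*t * ((g1 x)^2 + (g2 x)^2) +
            (-2*t) * (f1 x * g1 x + f2 x * g2 x))) + ∫ x in torusBox, ((f1 x)^2 + (f2 x)^2) :=
        MeasureTheory.integral_add ((i1.const_mul _).add (i2.const_mul _)) i3
      have eB : (∫ x in torusBox, (t*t * ((g1 x)^2 + (g2 x)^2) +
          (-2*t) * (f1 x * g1 x + f2 x * g2 x))) =
          (∫ x in torusBox, t*t * ((g1 x)^2 + (g2 x)^2)) +
          ∫ x in torusBox, (-2*t) * (f1 x * g1 x + f2 x * g2 x) :=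
        MeasureTheory.integral_add (i1.const_mul _) (i2.const_mul _)
      rw [eA, eB, MeasureTheory.integral_const_mul, MeasureTheory.integral_const_mul]
      rw [← hA, ← hB, ← hC]
      ring
    rw [← hexp]
    exact hnn
  have hdisc := discrim_le_zero hquad
  unfold discrim at hdisc
  have hCsq : Cmt^2 ≤ Amt * Bmt := by nlinarith [hdisc]
  calc Cmt ≤ |Cmt| := le_abs_self _
    _ = Real.sqrt (Cmt^2) := (Real.sqrt_sq_eq_abs Cmt).symm
    _ ≤ Real.sqrt (Amt * Bmt) := Real.sqrt_le_sqrt hCsq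
    _ = Real.sqrt Amt * Real.sqrt Bmt := Real.sqrt_mul hAnn _

-- ---------- finite weighted l2 triangle inequality ----------
lemma sqrt2_add_le (u u' v v' : ℝ) (hu : 0 ≤ u) (hu' : 0 ≤ u') (hv : 0 ≤ v) (hv' : 0 ≤ v') :
    u*v + u'*v' ≤ Real.sqrt (u^2 + u'^2) * Real.sqrt (v^2 + v'^2) := by
  have hcs : (u*v + u'*v')^2 ≤ (u^2 + u'^2) * (v^2 + v'^2) := by nlinarith [sq_nonneg (u*v' - u'*v)]
  calc u*v + u'*v' ≤ |u*v + u'*v'| := le_abs_self _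
    _ = Real.sqrt ((u*v + u'*v')^2) := (Real.sqrt_sq_eq_abs _).symm
    _ ≤ Real.sqrt ((u^2 + u'^2) * (v^2 + v'^2)) := Real.sqrt_le_sqrt hcs
    _ = _ := Real.sqrt_mul (by positivity) _

lemma weighted_CS (K : Finset (ℤ × ℤ)) (w P Q C D : ℤ × ℤ → ℝ) (hw : ∀ k ∈ K, 0 ≤ w k) :
    ∑ k ∈ K, w k * (|P k| * |C k| + |Q k| * |D k|) ≤
      Real.sqrt (∑ k ∈ K, w k * ((P k)^2 + (Q k)^2)) *
      Real.sqrt (∑ k ∈ K, w k * ((C k)^2 + (D k)^2)) := by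
  have h1 : ∑ k ∈ K, w k * (|P k| * |C k| + |Q k| * |D k|) =
      (∑ k ∈ K, (Real.sqrt (w k) * |P k|) * (Real.sqrt (w k) * |C k|)) +
      ∑ k ∈ K, (Real.sqrt (w k) * |Q k|) * (Real.sqrt (w k) * |D k|) := by
    rw [← Finset.sum_add_distrib]
    apply Finset.sum_congr rfl
    intro k hk
    have hww : Real.sqrt (w k) * Real.sqrt (w k) = w k := Real.mul_self_sqrt (hw k hk)
    have hcomb : (Real.sqrt (w k) * |P k|) * (Real.sqrt (w k) * |C k|) +
        (Real.sqrt (w k) * |Q k|) * (Real.sqrt (w k) * |D k|) =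
        (Real.sqrt (w k) * Real.sqrt (w k)) * (|P k| * |C k| + |Q k| * |D k|) := by ring
    rw [hcomb, hww]
  rw [h1]
  have cs1 : (∑ k ∈ K, (Real.sqrt (w k) * |P k|) * (Real.sqrt (w k) * |C k|)) ≤
      Real.sqrt (∑ k ∈ K, w k * (P k)^2) * Real.sqrt (∑ k ∈ K, w k * (C k)^2) := by
    have := Finset.sum_mul_sq_le_sq_mul_sq K (fun k => Real.sqrt (w k) * |P k|)
      (fun k => Real.sqrt (w k) * |C k|)
    have heq1 : ∑ k ∈ K, (Real.sqrt (w k) * |P k|)^2 = ∑ k ∈ K, w k * (P k)^2 :=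
      Finset.sum_congr rfl fun k hk => by
        rw [mul_pow, Real.sq_sqrt (hw k hk), sq_abs]
    have heq2 : ∑ k ∈ K, (Real.sqrt (w k) * |C k|)^2 = ∑ k ∈ K, w k * (C k)^2 :=
      Finset.sum_congr rfl fun k hk => by
        rw [mul_pow, Real.sq_sqrt (hw k hk), sq_abs]
    rw [heq1, heq2] at this
    calc (∑ k ∈ K, (Real.sqrt (w k) * |P k|) * (Real.sqrt (w k) * |C k|))
        ≤ |∑ k ∈ K, (Real.sqrt (w k) * |P k|) * (Real.sqrt (w k) * |C k|)| := le_abs_self _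
      _ = Real.sqrt ((∑ k ∈ K, (Real.sqrt (w k) * |P k|) * (Real.sqrt (w k) * |C k|))^2) :=
          (Real.sqrt_sq_eq_abs _).symm
      _ ≤ Real.sqrt ((∑ k ∈ K, w k * (P k)^2) * ∑ k ∈ K, w k * (C k)^2) := Real.sqrt_le_sqrt this
      _ = _ := Real.sqrt_mul (Finset.sum_nonneg fun k hk => by
          have := hw k hk; positivity) _
  have cs2 : (∑ k ∈ K, (Real.sqrt (w k) * |Q k|) * (Real.sqrt (w k) * |D k|)) ≤
      Real.sqrt (∑ k ∈ K, w k * (Q k)^2) * Real.sqrt (∑ k ∈ K, w k * (D k)^2) := by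
    have := Finset.sum_mul_sq_le_sq_mul_sq K (fun k => Real.sqrt (w k) * |Q k|)
      (fun k => Real.sqrt (w k) * |D k|)
    have heq1 : ∑ k ∈ K, (Real.sqrt (w k) * |Q k|)^2 = ∑ k ∈ K, w k * (Q k)^2 :=
      Finset.sum_congr rfl fun k hk => by
        rw [mul_pow, Real.sq_sqrt (hw k hk), sq_abs]
    have heq2 : ∑ k ∈ K, (Real.sqrt (w k) * |D k|)^2 = ∑ k ∈ K, w k * (D k)^2 :=
      Finset.sum_congr rfl fun k hk => by
        rw [mul_pow, Real.sq_sqrt (hw k hk), sq_abs]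
    rw [heq1, heq2] at this
    calc (∑ k ∈ K, (Real.sqrt (w k) * |Q k|) * (Real.sqrt (w k) * |D k|))
        ≤ |∑ k ∈ K, (Real.sqrt (w k) * |Q k|) * (Real.sqrt (w k) * |D k|)| := le_abs_self _
      _ = Real.sqrt ((∑ k ∈ K, (Real.sqrt (w k) * |Q k|) * (Real.sqrt (w k) * |D k|))^2) :=
          (Real.sqrt_sq_eq_abs _).symm
      _ ≤ Real.sqrt ((∑ k ∈ K, w k * (Q k)^2) * ∑ k ∈ K, w k * (D k)^2) := Real.sqrt_le_sqrt this
      _ = _ := Real.sqrt_mul (Finset.sum_nonneg fun k hk => by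
          have := hw k hk; positivity) _
  have key := sqrt2_add_le (Real.sqrt (∑ k ∈ K, w k * (P k)^2)) (Real.sqrt (∑ k ∈ K, w k * (Q k)^2))
    (Real.sqrt (∑ k ∈ K, w k * (C k)^2)) (Real.sqrt (∑ k ∈ K, w k * (D k)^2))
    (Real.sqrt_nonneg _) (Real.sqrt_nonneg _) (Real.sqrt_nonneg _) (Real.sqrt_nonneg _)
  have hP2 : Real.sqrt (∑ k ∈ K, w k * (P k)^2)^2 = ∑ k ∈ K, w k * (P k)^2 :=
    Real.sq_sqrt (Finset.sum_nonneg fun k hk => by have := hw k hk; positivity)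
  have hQ2 : Real.sqrt (∑ k ∈ K, w k * (Q k)^2)^2 = ∑ k ∈ K, w k * (Q k)^2 :=
    Real.sq_sqrt (Finset.sum_nonneg fun k hk => by have := hw k hk; positivity)
  have hC2 : Real.sqrt (∑ k ∈ K, w k * (C k)^2)^2 = ∑ k ∈ K, w k * (C k)^2 :=
    Real.sq_sqrt (Finset.sum_nonneg fun k hk => by have := hw k hk; positivity)
  have hD2 : Real.sqrt (∑ k ∈ K, w k * (D k)^2)^2 = ∑ k ∈ K, w k * (D k)^2 :=
    Real.sq_sqrt (Finset.sum_nonneg fun k hk => by have := hw k hk; positivity)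
  rw [hP2, hQ2, hC2, hD2] at key
  have hsum1 : (∑ k ∈ K, w k * (P k)^2) + (∑ k ∈ K, w k * (Q k)^2) =
      ∑ k ∈ K, w k * ((P k)^2 + (Q k)^2) := by
    rw [← Finset.sum_add_distrib]; exact Finset.sum_congr rfl fun k _ => by ring
  have hsum2 : (∑ k ∈ K, w k * (C k)^2) + (∑ k ∈ K, w k * (D k)^2) =
      ∑ k ∈ K, w k * ((C k)^2 + (D k)^2) := by
    rw [← Finset.sum_add_distrib]; exact Finset.sum_congr rfl fun k _ => by ring
  rw [hsum1, hsum2] at key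
  linarith [cs1, cs2, key]

lemma l2_triangle (K : Finset (ℤ × ℤ)) (w R S P Q C D m n : ℤ × ℤ → ℝ) (B : ℝ)
    (hw : ∀ k ∈ K, 0 ≤ w k) (hB : 0 ≤ B)
    (hm : ∀ k ∈ K, |m k| ≤ 1) (hn : ∀ k ∈ K, |n k| ≤ B)
    (hR : ∀ k ∈ K, R k = m k * P k - n k * C k)
    (hS : ∀ k ∈ K, S k = m k * Q k - n k * D k) :
    Real.sqrt (∑ k ∈ K, w k * ((R k)^2 + (S k)^2)) ≤
      Real.sqrt (∑ k ∈ K, w k * ((P k)^2 + (Q k)^2)) +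
      B * Real.sqrt (∑ k ∈ K, w k * ((C k)^2 + (D k)^2)) := by
  set X := ∑ k ∈ K, w k * ((P k)^2 + (Q k)^2) with hX
  set Y := ∑ k ∈ K, w k * ((C k)^2 + (D k)^2) with hY
  have hXnn : 0 ≤ X := Finset.sum_nonneg fun k hk => by
    have := hw k hk; positivity
  have hYnn : 0 ≤ Y := Finset.sum_nonneg fun k hk => by
    have := hw k hk; positivity
  have hstep : ∑ k ∈ K, w k * ((R k)^2 + (S k)^2) ≤
      X + 2*B*(∑ k ∈ K, w k * (|P k| * |C k| + |Q k| * |D k|)) + B^2 * Y := by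
    rw [hX, hY, Finset.mul_sum, Finset.mul_sum, ← Finset.sum_add_distrib, ← Finset.sum_add_distrib]
    apply Finset.sum_le_sum
    intro k hk
    have hm' := hm k hk
    have hn' := hn k hk
    have hwk := hw k hk
    have hmsq : (m k)^2 ≤ 1 := by nlinarith [abs_nonneg (m k), sq_abs (m k)]
    have hnsq : (n k)^2 ≤ B^2 := by nlinarith [abs_nonneg (n k), sq_abs (n k)]
    have habs1 : -(2 * (m k * n k * (P k * C k + Q k * D k))) ≤
        2*B*(|P k| * |C k| + |Q k| * |D k|) := by
      have h1 : |m k * n k * (P k * C k + Q k * D k)| ≤ B * (|P k| * |C k| + |Q k| * |D k|) := by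
        rw [abs_mul, abs_mul]
        have : |P k * C k + Q k * D k| ≤ |P k| * |C k| + |Q k| * |D k| := by
          calc |P k * C k + Q k * D k| ≤ |P k * C k| + |Q k * D k| := abs_add_le _ _
            _ = |P k| * |C k| + |Q k| * |D k| := by rw [abs_mul, abs_mul]
        calc |m k| * |n k| * |P k * C k + Q k * D k| ≤
            1 * B * (|P k| * |C k| + |Q k| * |D k|) := by
              apply mul_le_mul (mul_le_mul hm' hn' (abs_nonneg _) zero_le_one) this
                (abs_nonneg _) (by positivity)
          _ = B * (|P k| * |C k| + |Q k| * |D k|) := by ring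
      nlinarith [neg_abs_le (m k * n k * (P k * C k + Q k * D k))]
    have hexp : (R k)^2 + (S k)^2 = (m k)^2 * ((P k)^2 + (Q k)^2)
        - 2 * (m k * n k * (P k * C k + Q k * D k)) + (n k)^2 * ((C k)^2 + (D k)^2) := by
      rw [hR k hk, hS k hk]; ring
    have hb1 : (m k)^2 * ((P k)^2 + (Q k)^2) ≤ (P k)^2 + (Q k)^2 := by nlinarith [sq_nonneg (P k), sq_nonneg (Q k)]
    have hb2 : (n k)^2 * ((C k)^2 + (D k)^2) ≤ B^2 * ((C k)^2 + (D k)^2) := by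
      nlinarith [sq_nonneg (C k), sq_nonneg (D k)]
    have := habs1
    nlinarith [mul_le_mul_of_nonneg_left hb1 hwk, mul_le_mul_of_nonneg_left hb2 hwk,
      mul_le_mul_of_nonneg_left habs1 hwk]
  have hcs := weighted_CS K w P Q C D hw
  have hfinal : ∑ k ∈ K, w k * ((R k)^2 + (S k)^2) ≤
      (Real.sqrt X + B * Real.sqrt Y)^2 := by
    have hXsq : Real.sqrt X ^ 2 = X := Real.sq_sqrt hXnn
    have hYsq : Real.sqrt Y ^ 2 = Y := Real.sq_sqrt hYnn
    have h2 : 2*B*(∑ k ∈ K, w k * (|P k| * |C k| + |Q k| * |D k|)) ≤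
        2*B*(Real.sqrt X * Real.sqrt Y) := by
      apply mul_le_mul_of_nonneg_left hcs (by positivity)
    nlinarith [hstep, h2]
  calc Real.sqrt (∑ k ∈ K, w k * ((R k)^2 + (S k)^2)) ≤
      Real.sqrt ((Real.sqrt X + B * Real.sqrt Y)^2) := Real.sqrt_le_sqrt hfinal
    _ = Real.sqrt X + B * Real.sqrt Y := Real.sqrt_sq (by positivity)

-- ---------- integration by parts against a trig polynomial ----------
lemma IBP_grad (N : ℕ) (g : ℝ × ℝ → ℝ) (g' : ℝ × ℝ → ((ℝ × ℝ) →L[ℝ] ℝ))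
    (hg : ∀ x, HasFDerivAt g (g' x) x) (hgc : Continuous g)
    (h1 : Continuous fun x => g' x (1, 0)) (h2 : Continuous fun x => g' x (0, 1))
    (hper1 : ∀ x : ℝ × ℝ, g (x.1 + 2*π, x.2) = g x)
    (hper2 : ∀ x : ℝ × ℝ, g (x.1, x.2 + 2*π) = g x)
    (c d : ℤ × ℤ → ℝ) :
    ∫ x in torusBox, (g' x (1, 0) * pd1 (TP N c d) x + g' x (0, 1) * pd2 (TP N c d) x) =
      - ∫ x in torusBox, g x * lap (TP N c d) x := by
  -- first derivative coefficients
  set c1 : ℤ × ℤ → ℝ := fun k => (k.1 : ℝ) * d k with hc1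
  set d1 : ℤ × ℤ → ℝ := fun k => -(k.1 : ℝ) * c k with hd1
  set c2 : ℤ × ℤ → ℝ := fun k => (k.2 : ℝ) * d k with hc2
  set d2 : ℤ × ℤ → ℝ := fun k => -(k.2 : ℝ) * c k with hd2
  have hpd1 : pd1 (TP N c d) = TP N c1 d1 := pd1_TP N c d
  have hpd2 : pd2 (TP N c d) = TP N c2 d2 := pd2_TP N c d
  -- the two product rules
  have hG1 : ∀ x, HasFDerivAt (fun y => g y * TP N c1 d1 y)
      (g x • (∑ k ∈ KK N, ((- c1 k * Real.sin (ph k x) + d1 k * Real.cos (ph k x)) • phL k))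
        + TP N c1 d1 x • g' x) x :=
    fun x => (hg x).mul (hasFDerivAt_TP N c1 d1 x)
  have hG2 : ∀ x, HasFDerivAt (fun y => g y * TP N c2 d2 y)
      (g x • (∑ k ∈ KK N, ((- c2 k * Real.sin (ph k x) + d2 k * Real.cos (ph k x)) • phL k))
        + TP N c2 d2 x • g' x) x :=
    fun x => (hg x).mul (hasFDerivAt_TP N c2 d2 x)
  have happD1 : ∀ x : ℝ × ℝ,
      (∑ k ∈ KK N, ((- c1 k * Real.sin (ph k x) + d1 k * Real.cos (ph k x)) • phL k)) (1, 0) =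
        pd1 (TP N c1 d1) x := by
    intro x
    rw [pd1, (hasFDerivAt_TP N c1 d1 x).fderiv]
  have happD2 : ∀ x : ℝ × ℝ,
      (∑ k ∈ KK N, ((- c2 k * Real.sin (ph k x) + d2 k * Real.cos (ph k x)) • phL k)) (0, 1) =
        pd2 (TP N c2 d2) x := by
    intro x
    rw [pd2, (hasFDerivAt_TP N c2 d2 x).fderiv]
  have happ1 : ∀ x : ℝ × ℝ,
      (g x • (∑ k ∈ KK N, ((- c1 k * Real.sin (ph k x) + d1 k * Real.cos (ph k x)) • phL k))
        + TP N c1 d1 x • g' x) (1, 0) =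
      g x * pd1 (pd1 (TP N c d)) x + pd1 (TP N c d) x * g' x (1, 0) := by
    intro x
    rw [ContinuousLinearMap.add_apply, ContinuousLinearMap.smul_apply,
      ContinuousLinearMap.smul_apply, smul_eq_mul, smul_eq_mul, happD1, hpd1]
  have happ2 : ∀ x : ℝ × ℝ,
      (g x • (∑ k ∈ KK N, ((- c2 k * Real.sin (ph k x) + d2 k * Real.cos (ph k x)) • phL k))
        + TP N c2 d2 x • g' x) (0, 1) =
      g x * pd2 (pd2 (TP N c d)) x + pd2 (TP N c d) x * g' x (0, 1) := by
    intro x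
    rw [ContinuousLinearMap.add_apply, ContinuousLinearMap.smul_apply,
      ContinuousLinearMap.smul_apply, smul_eq_mul, smul_eq_mul, happD2, hpd2]
  -- continuity of the integrands
  have cpd11 : Continuous (pd1 (pd1 (TP N c d))) := by
    rw [hpd1, pd1_TP]; exact continuous_TP _ _ _
  have cpd22 : Continuous (pd2 (pd2 (TP N c d))) := by
    rw [hpd2, pd2_TP]; exact continuous_TP _ _ _
  have cpd1 : Continuous (pd1 (TP N c d)) := by rw [hpd1]; exact continuous_TP _ _ _
  have cpd2 : Continuous (pd2 (TP N c d)) := by rw [hpd2]; exact continuous_TP _ _ _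
  -- IBP in each variable
  have hz1 : ∫ x in torusBox,
      (g x * pd1 (pd1 (TP N c d)) x + pd1 (TP N c d) x * g' x (1, 0)) = 0 := by
    have := int_pd1_eq_zero (fun y => g y * TP N c1 d1 y) _ hG1
      (by
        have : (fun x => (g x • (∑ k ∈ KK N,
            ((- c1 k * Real.sin (ph k x) + d1 k * Real.cos (ph k x)) • phL k))
            + TP N c1 d1 x • g' x) (1, 0)) =
            fun x => g x * pd1 (pd1 (TP N c d)) x + pd1 (TP N c d) x * g' x (1, 0) :=
          funext happ1
        rw [this]
        exact (hgc.mul cpd11).add (cpd1.mul h1))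
      (by
        intro x
        rw [TP_per1, hper1])
    have heq : ∫ x in torusBox,
        (g x * pd1 (pd1 (TP N c d)) x + pd1 (TP N c d) x * g' x (1, 0)) =
        ∫ x in torusBox, (g x • (∑ k ∈ KK N,
          ((- c1 k * Real.sin (ph k x) + d1 k * Real.cos (ph k x)) • phL k))
          + TP N c1 d1 x • g' x) (1, 0) :=
      MeasureTheory.setIntegral_congr_fun measurableSet_Icc (fun x _ => (happ1 x).symm)
    rw [heq]
    exact this
  have hz2 : ∫ x in torusBox,
      (g x * pd2 (pd2 (TP N c d)) x + pd2 (TP N c d) x * g' x (0, 1)) = 0 := by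
    have := int_pd2_eq_zero (fun y => g y * TP N c2 d2 y) _ hG2
      (by
        have : (fun x => (g x • (∑ k ∈ KK N,
            ((- c2 k * Real.sin (ph k x) + d2 k * Real.cos (ph k x)) • phL k))
            + TP N c2 d2 x • g' x) (0, 1)) =
            fun x => g x * pd2 (pd2 (TP N c d)) x + pd2 (TP N c d) x * g' x (0, 1) :=
          funext happ2
        rw [this]
        exact (hgc.mul cpd22).add (cpd2.mul h2))
      (by
        intro x
        rw [TP_per2, hper2])
    have heq : ∫ x in torusBox,
        (g x * pd2 (pd2 (TP N c d)) x + pd2 (TP N c d) x * g' x (0, 1)) =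
        ∫ x in torusBox, (g x • (∑ k ∈ KK N,
          ((- c2 k * Real.sin (ph k x) + d2 k * Real.cos (ph k x)) • phL k))
          + TP N c2 d2 x • g' x) (0, 1) :=
      MeasureTheory.setIntegral_congr_fun measurableSet_Icc (fun x _ => (happ2 x).symm)
    rw [heq]
    exact this
  -- split and recombine
  have i11 : IntegrableOn (fun x => g x * pd1 (pd1 (TP N c d)) x) torusBox :=
    integrableOn_box (hgc.mul cpd11)
  have i12 : IntegrableOn (fun x => pd1 (TP N c d) x * g' x (1, 0)) torusBox :=
    integrableOn_box (cpd1.mul h1)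
  have i21 : IntegrableOn (fun x => g x * pd2 (pd2 (TP N c d)) x) torusBox :=
    integrableOn_box (hgc.mul cpd22)
  have i22 : IntegrableOn (fun x => pd2 (TP N c d) x * g' x (0, 1)) torusBox :=
    integrableOn_box (cpd2.mul h2)
  have hs1 : (∫ x in torusBox, g x * pd1 (pd1 (TP N c d)) x) +
      (∫ x in torusBox, pd1 (TP N c d) x * g' x (1, 0)) = 0 := by
    rw [← MeasureTheory.integral_add i11 i12]; exact hz1
  have hs2 : (∫ x in torusBox, g x * pd2 (pd2 (TP N c d)) x) +
      (∫ x in torusBox, pd2 (TP N c d) x * g' x (0, 1)) = 0 := by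
    rw [← MeasureTheory.integral_add i21 i22]; exact hz2
  have hLHS : ∫ x in torusBox, (g' x (1, 0) * pd1 (TP N c d) x + g' x (0, 1) * pd2 (TP N c d) x) =
      (∫ x in torusBox, pd1 (TP N c d) x * g' x (1, 0)) +
      ∫ x in torusBox, pd2 (TP N c d) x * g' x (0, 1) := by
    rw [← MeasureTheory.integral_add i12 i22]
    apply MeasureTheory.setIntegral_congr_fun measurableSet_Icc
    intro x _
    ring
  have hRHS : ∫ x in torusBox, g x * lap (TP N c d) x =
      (∫ x in torusBox, g x * pd1 (pd1 (TP N c d)) x) +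
      ∫ x in torusBox, g x * pd2 (pd2 (TP N c d)) x := by
    rw [← MeasureTheory.integral_add i11 i21]
    apply MeasureTheory.setIntegral_congr_fun measurableSet_Icc
    intro x _
    simp only [lap]
    ring
  rw [hLHS, hRHS]
  linarith [hs1, hs2]

-- ---------- sup norm facts ----------
lemma abs_TP_le (N : ℕ) (a b : ℤ × ℤ → ℝ) (x : ℝ × ℝ) :
    |TP N a b x| ≤ ∑ k ∈ KK N, (|a k| + |b k|) := by
  unfold TP
  refine (Finset.abs_sum_le_sum_abs _ _).trans (Finset.sum_le_sum ?_)
  intro k _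
  calc |a k * Real.cos (ph k x) + b k * Real.sin (ph k x)|
      ≤ |a k * Real.cos (ph k x)| + |b k * Real.sin (ph k x)| := abs_add_le _ _
    _ = |a k| * |Real.cos (ph k x)| + |b k| * |Real.sin (ph k x)| := by
        rw [abs_mul, abs_mul]
    _ ≤ |a k| * 1 + |b k| * 1 := add_le_add
        (mul_le_mul_of_nonneg_left (Real.abs_cos_le_one _) (abs_nonneg _))
        (mul_le_mul_of_nonneg_left (Real.abs_sin_le_one _) (abs_nonneg _))
    _ = |a k| + |b k| := by ring

lemma le_Linf_TP (N : ℕ) (a b : ℤ × ℤ → ℝ) (x : ℝ × ℝ) :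
    |TP N a b x| ≤ Linf (TP N a b) := by
  apply le_ciSup (f := fun x => |TP N a b x|)
  refine ⟨∑ k ∈ KK N, (|a k| + |b k|), ?_⟩
  rintro y ⟨x', rfl⟩
  exact abs_TP_le N a b x'

lemma Linf_TP_nonneg (N : ℕ) (a b : ℤ × ℤ → ℝ) : 0 ≤ Linf (TP N a b) :=
  (abs_nonneg _).trans (le_Linf_TP N a b (0, 0))

-- ---------- derivative of the cubic nonlinearity ----------
lemma hasFDerivAt_cube (N : ℕ) (p q : ℤ × ℤ → ℝ) (x : ℝ × ℝ) :
    HasFDerivAt (fun y => TP N p q y ^ 3 - TP N p q y)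
      ((3 * (TP N p q x)^2 - 1) •
        (∑ k ∈ KK N, ((- p k * Real.sin (ph k x) + q k * Real.cos (ph k x)) • phL k))) x := by
  have hu := hasFDerivAt_TP N p q x
  set Du := ∑ k ∈ KK N, ((- p k * Real.sin (ph k x) + q k * Real.cos (ph k x)) • phL k) with hDu
  have h3 : HasFDerivAt (fun y => TP N p q y * (TP N p q y * TP N p q y))
      (TP N p q x • (TP N p q x • Du + TP N p q x • Du) + (TP N p q x * TP N p q x) • Du) x :=
    hu.mul (hu.mul hu)
  have heq : (fun y => TP N p q y ^ 3 - TP N p q y) =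
      fun y => TP N p q y * (TP N p q y * TP N p q y) - TP N p q y := by
    funext y; ring
  rw [heq]
  have := h3.sub hu
  refine this.congr_fderiv ?_
  module

-- ---------- splitting linear combinations of sums ----------
lemma sum_split3 (K : Finset (ℤ × ℤ)) (f g h : ℤ × ℤ → ℝ) (t1 t2 : ℝ) :
    ∑ k ∈ K, (f k + t1 * g k + t2 * h k) =
      (∑ k ∈ K, f k) + t1 * (∑ k ∈ K, g k) + t2 * (∑ k ∈ K, h k) := by
  rw [Finset.mul_sum, Finset.mul_sum, ← Finset.sum_add_distrib, ← Finset.sum_add_distrib]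

lemma sum_split2 (K : Finset (ℤ × ℤ)) (f g : ℤ × ℤ → ℝ) (t1 : ℝ) :
    ∑ k ∈ K, (t1 * f k + g k) = t1 * (∑ k ∈ K, f k) + (∑ k ∈ K, g k) := by
  rw [Finset.mul_sum, ← Finset.sum_add_distrib]

lemma H1sq_nonneg (u : ℝ × ℝ → ℝ) : 0 ≤ H1sq u :=
  setIntegral_nonneg measurableSet_Icc (fun x _ => by positivity)

/-- `Ḣ¹` bound for one step of the stabilized semi-implicit Cahn–Hilliard scheme
`u^{n+1} = (1-AτΔ)(1+ντΔ²-AτΔ)⁻¹u^n + τΔΠ_N(1+ντΔ²-AτΔ)⁻¹f(u^n)`, i.e.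
`(u^{n+1}-u^n)/τ = -νΔ²u^{n+1} + AΔ(u^{n+1}-u^n) + ΔΠ_N f(u^n)`, `f(u)=u³-u`:
`‖u^{n+1}‖_{Ḣ¹} ≤ (1 + 1/A + (3/A)‖u^n‖_∞²)·‖u^n‖_{Ḣ¹}`. -/
theorem CH_one_step_H1_bound (ν τ A : ℝ) (hν : 0 < ν) (hτ : 0 < τ) (hA : 1 ≤ A)
    (N : ℕ) (un un1 w : ℝ × ℝ → ℝ)
    (hun : IsTrigPoly N un) (hun1 : IsTrigPoly N un1) (hw : IsTrigPoly N w)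
    (hmean : ∫ x in torusBox, un x = 0) (hmean1 : ∫ x in torusBox, un1 x = 0)
    -- `w = Π_N f(u^n)`
    (hproj : ∀ v : ℝ × ℝ → ℝ, IsTrigPoly N v →
      ∫ x in torusBox, (w x - ((un x) ^ 3 - un x)) * v x = 0)
    -- the scheme
    (hscheme : ∀ x : ℝ × ℝ, (un1 x - un x) / τ =
      -ν * lap (lap un1) x + A * lap (fun y => un1 y - un y) x + lap w x) :
    Real.sqrt (H1sq un1) ≤
      (1 + 1 / A + (3 / A) * (Linf un) ^ 2) * Real.sqrt (H1sq un) := by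
  have hA0 : (0:ℝ) < A := lt_of_lt_of_le one_pos hA
  obtain ⟨p, q, hp0, hpe⟩ := hun
  obtain ⟨r, s, hr0, hre⟩ := hun1
  obtain ⟨c, d, hc0, hce⟩ := hw
  have hun_eq : un = TP N p q := funext fun x => by rw [hpe x]; rfl
  have hun1_eq : un1 = TP N r s := funext fun x => by rw [hre x]; rfl
  have hw_eq : w = TP N c d := funext fun x => by rw [hce x]; rfl
  subst hun_eq hun1_eq hw_eq
  clear hpe hre hce hmean hmean1
  -- abbreviations
  set L := Linf (TP N p q) with hL
  have hLnn : 0 ≤ L := Linf_TP_nonneg N p q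
  -- ============ Step A: scheme in Fourier coefficients ============
  have hl1 : lap (lap (TP N r s)) =
      TP N (fun k => wt k^2 * r k) (fun k => wt k^2 * s k) := by
    rw [lap_TP, lap_TP]
    exact TP_congr N (fun k => by simp only [wt]; ring) (fun k => by simp only [wt]; ring)
  have hl2' : (fun y => TP N r s y - TP N p q y) = TP N (r - p) (s - q) :=
    funext fun y => TP_sub N r s p q y
  have hl2 : lap (fun y => TP N r s y - TP N p q y) =
      TP N (fun k => -(wt k) * (r k - p k)) (fun k => -(wt k) * (s k - q k)) := by
    rw [hl2', lap_TP]
    exact TP_congr N (fun k => by simp only [wt, Pi.sub_apply]) (fun k => by simp only [wt, Pi.sub_apply])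
  have hl3 : lap (TP N c d) =
      TP N (fun k => -(wt k) * c k) (fun k => -(wt k) * d k) := by
    rw [lap_TP]
    exact TP_congr N (fun k => by simp only [wt]) (fun k => by simp only [wt])
  -- the pointwise identity in merged TP form
  have hpt : TP N (fun k => (1 + ν*τ*wt k^2 + A*τ*wt k) * r k)
        (fun k => (1 + ν*τ*wt k^2 + A*τ*wt k) * s k) =
      TP N (fun k => (1 + A*τ*wt k) * p k - τ * wt k * c k)
        (fun k => (1 + A*τ*wt k) * q k - τ * wt k * d k) := by
    funext x
    have h := hscheme x
    rw [hl1, hl2, hl3] at h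
    rw [div_eq_iff (ne_of_gt hτ)] at h
    unfold TP at h ⊢
    -- name the atomic sums
    set S1 := ∑ k ∈ KK N, (r k * Real.cos (ph k x) + s k * Real.sin (ph k x)) with hS1
    set S2 := ∑ k ∈ KK N, (p k * Real.cos (ph k x) + q k * Real.sin (ph k x)) with hS2
    set S3 := ∑ k ∈ KK N, ((wt k^2 * r k) * Real.cos (ph k x) + (wt k^2 * s k) * Real.sin (ph k x)) with hS3
    set S4 := ∑ k ∈ KK N, ((wt k * r k) * Real.cos (ph k x) + (wt k * s k) * Real.sin (ph k x)) with hS4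
    set S5 := ∑ k ∈ KK N, ((wt k * p k) * Real.cos (ph k x) + (wt k * q k) * Real.sin (ph k x)) with hS5
    set S6 := ∑ k ∈ KK N, ((wt k * c k) * Real.cos (ph k x) + (wt k * d k) * Real.sin (ph k x)) with hS6
    have hG : ∑ k ∈ KK N, ((1 + ν*τ*wt k^2 + A*τ*wt k) * r k * Real.cos (ph k x) +
        (1 + ν*τ*wt k^2 + A*τ*wt k) * s k * Real.sin (ph k x)) =
        S1 + (ν*τ) * S3 + (A*τ) * S4 := by
      rw [hS1, hS3, hS4, ← sum_split3]
      exact Finset.sum_congr rfl fun k _ => by ring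
    beta_reduce at h
    have hH : ∑ k ∈ KK N, (((1 + A*τ*wt k) * p k - τ * wt k * c k) * Real.cos (ph k x) +
        ((1 + A*τ*wt k) * q k - τ * wt k * d k) * Real.sin (ph k x)) =
        S2 + (A*τ) * S5 + (-τ) * S6 := by
      rw [hS2, hS5, hS6, ← sum_split3]
      exact Finset.sum_congr rfl fun k _ => by ring
    have h4 : ∑ k ∈ KK N, (-(wt k) * (r k - p k) * Real.cos (ph k x) +
        -(wt k) * (s k - q k) * Real.sin (ph k x)) = (-1) * S4 + S5 := by
      rw [hS4, hS5, Finset.mul_sum, ← Finset.sum_add_distrib]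
      exact Finset.sum_congr rfl fun k _ => by ring
    have h6 : ∑ k ∈ KK N, (-(wt k) * c k * Real.cos (ph k x) +
        -(wt k) * d k * Real.sin (ph k x)) = (-1) * S6 := by
      rw [hS6, Finset.mul_sum]
      exact Finset.sum_congr rfl fun k _ => by ring
    rw [h4, h6] at h
    rw [hG, hH]
    -- h : S1 - S2 = (-ν * S3 + A * ((-1)*S4 + S5) + (-1)*S6) * τ
    linear_combination h
  -- coefficient identities
  have hcoef : ∀ k ∈ KK N,
      ((1 + ν*τ*wt k^2 + A*τ*wt k) * (r k + r (-k)) =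
        (1 + A*τ*wt k) * (p k + p (-k)) - τ * wt k * (c k + c (-k))) ∧
      ((1 + ν*τ*wt k^2 + A*τ*wt k) * (s k - s (-k)) =
        (1 + A*τ*wt k) * (q k - q (-k)) - τ * wt k * (d k - d (-k))) := by
    intro k hk
    have h2pi : (2*π^2 : ℝ) ≠ 0 := by positivity
    constructor
    · have e1 := coefA_TP (N := N) (fun k => (1 + ν*τ*wt k^2 + A*τ*wt k) * r k)
        (fun k => (1 + ν*τ*wt k^2 + A*τ*wt k) * s k) hk
      have e2 := coefA_TP (N := N) (fun k => (1 + A*τ*wt k) * p k - τ * wt k * c k)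
        (fun k => (1 + A*τ*wt k) * q k - τ * wt k * d k) hk
      rw [hpt] at e1
      have := mul_left_cancel₀ h2pi (e1.symm.trans e2)
      simp only [wt_neg] at this
      linear_combination this
    · have e1 := coefB_TP (N := N) (fun k => (1 + ν*τ*wt k^2 + A*τ*wt k) * r k)
        (fun k => (1 + ν*τ*wt k^2 + A*τ*wt k) * s k) hk
      have e2 := coefB_TP (N := N) (fun k => (1 + A*τ*wt k) * p k - τ * wt k * c k)
        (fun k => (1 + A*τ*wt k) * q k - τ * wt k * d k) hk
      rw [hpt] at e1
      have := mul_left_cancel₀ h2pi (e1.symm.trans e2)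
      simp only [wt_neg] at this
      linear_combination this
  -- ============ Step B: multiplier bounds and the triangle inequality ============
  have hDpos : ∀ k : ℤ × ℤ, 0 < 1 + ν*τ*wt k^2 + A*τ*wt k := by
    intro k
    have h1 : 0 ≤ ν*τ*wt k^2 := by positivity
    have h2 : 0 ≤ A*τ*wt k := mul_nonneg (mul_nonneg hA0.le hτ.le) (wt_nonneg k)
    linarith
  have htri : Real.sqrt (H1sq (TP N r s)) ≤
      Real.sqrt (H1sq (TP N p q)) + (1/A) * Real.sqrt (H1sq (TP N c d)) := by
    have hH1r : H1sq (TP N r s) =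
        ∑ k ∈ KK N, (π^2 * wt k) * ((r k + r (-k))^2 + (s k - s (-k))^2) := by
      rw [H1sq_TP, Finset.mul_sum]
      exact Finset.sum_congr rfl fun k _ => by ring
    have hH1p : H1sq (TP N p q) =
        ∑ k ∈ KK N, (π^2 * wt k) * ((p k + p (-k))^2 + (q k - q (-k))^2) := by
      rw [H1sq_TP, Finset.mul_sum]
      exact Finset.sum_congr rfl fun k _ => by ring
    have hH1c : H1sq (TP N c d) =
        ∑ k ∈ KK N, (π^2 * wt k) * ((c k + c (-k))^2 + (d k - d (-k))^2) := by
      rw [H1sq_TP, Finset.mul_sum]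
      exact Finset.sum_congr rfl fun k _ => by ring
    rw [hH1r, hH1p, hH1c]
    apply l2_triangle (KK N) (fun k => π^2 * wt k) (fun k => r k + r (-k)) (fun k => s k - s (-k))
      (fun k => p k + p (-k)) (fun k => q k - q (-k)) (fun k => c k + c (-k)) (fun k => d k - d (-k))
      (fun k => (1 + A*τ*wt k) / (1 + ν*τ*wt k^2 + A*τ*wt k))
      (fun k => (τ * wt k) / (1 + ν*τ*wt k^2 + A*τ*wt k)) (1/A)
    · intro k _
      have := wt_nonneg k
      positivity
    · positivity
    · intro k _
      have hD := hDpos k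
      have hnum : 0 ≤ 1 + A*τ*wt k := by
        have h2 : 0 ≤ A*τ*wt k := mul_nonneg (mul_nonneg hA0.le hτ.le) (wt_nonneg k)
        linarith
      rw [abs_of_nonneg (div_nonneg hnum hD.le)]
      rw [div_le_one hD]
      have : 0 ≤ ν*τ*wt k^2 := by positivity
      linarith
    · intro k _
      have hD := hDpos k
      have hnum : 0 ≤ τ * wt k := mul_nonneg hτ.le (wt_nonneg k)
      rw [abs_of_nonneg (div_nonneg hnum hD.le)]
      rw [div_le_div_iff₀ hD hA0]
      have : 0 ≤ ν*τ*wt k^2 := by positivity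
      nlinarith [mul_nonneg hnum (sub_nonneg.mpr hA)]
    · intro k hk
      have hD := (hDpos k).ne'
      rw [div_mul_eq_mul_div, div_mul_eq_mul_div, div_sub_div_same, eq_div_iff hD]
      linear_combination (hcoef k hk).1
    · intro k hk
      have hD := (hDpos k).ne'
      rw [div_mul_eq_mul_div, div_mul_eq_mul_div, div_sub_div_same, eq_div_iff hD]
      linear_combination (hcoef k hk).2
  -- ============ Step C: nonlinear estimate ============
  set F := fun x : ℝ × ℝ => TP N p q x ^ 3 - TP N p q x with hF
  have hFc : Continuous F := ((continuous_TP N p q).pow 3).sub (continuous_TP N p q)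
  have hpd1F : pd1 F = fun x => (3 * (TP N p q x)^2 - 1) *
      TP N (fun k => (k.1:ℝ) * q k) (fun k => -(k.1:ℝ) * p k) x := by
    funext x
    rw [pd1, (hasFDerivAt_cube N p q x).fderiv]
    rw [ContinuousLinearMap.smul_apply, smul_eq_mul]
    congr 1
    have : (∑ k ∈ KK N, ((- p k * Real.sin (ph k x) + q k * Real.cos (ph k x)) • phL k)) (1, 0) =
        pd1 (TP N p q) x := by
      rw [pd1, (hasFDerivAt_TP N p q x).fderiv]
    rw [this, pd1_TP]
  have hpd2F : pd2 F = fun x => (3 * (TP N p q x)^2 - 1) *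
      TP N (fun k => (k.2:ℝ) * q k) (fun k => -(k.2:ℝ) * p k) x := by
    funext x
    rw [pd2, (hasFDerivAt_cube N p q x).fderiv]
    rw [ContinuousLinearMap.smul_apply, smul_eq_mul]
    congr 1
    have : (∑ k ∈ KK N, ((- p k * Real.sin (ph k x) + q k * Real.cos (ph k x)) • phL k)) (0, 1) =
        pd2 (TP N p q) x := by
      rw [pd2, (hasFDerivAt_TP N p q x).fderiv]
    rw [this, pd2_TP]
  have hHF : H1sq F ≤ (3*L^2+1)^2 * H1sq (TP N p q) := by
    have hmono : ∫ x in torusBox,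
        (((3 * (TP N p q x)^2 - 1) * TP N (fun k => (k.1:ℝ) * q k) (fun k => -(k.1:ℝ) * p k) x)^2 +
         ((3 * (TP N p q x)^2 - 1) * TP N (fun k => (k.2:ℝ) * q k) (fun k => -(k.2:ℝ) * p k) x)^2) ≤
        ∫ x in torusBox, (3*L^2+1)^2 *
          ((TP N (fun k => (k.1:ℝ) * q k) (fun k => -(k.1:ℝ) * p k) x)^2 +
           (TP N (fun k => (k.2:ℝ) * q k) (fun k => -(k.2:ℝ) * p k) x)^2) := by
      apply MeasureTheory.setIntegral_mono_on
      · apply integrableOn_box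
        apply Continuous.add
        · exact (((continuous_const.mul ((continuous_TP N p q).pow 2)).sub
            continuous_const).mul (continuous_TP _ _ _)).pow 2
        · exact (((continuous_const.mul ((continuous_TP N p q).pow 2)).sub
            continuous_const).mul (continuous_TP _ _ _)).pow 2
      · apply integrableOn_box
        exact continuous_const.mul (((continuous_TP _ _ _).pow 2).add ((continuous_TP _ _ _).pow 2))
      · exact measurableSet_Icc
      · intro x _
        have hux : |TP N p q x| ≤ L := le_Linf_TP N p q x
        have husq : (TP N p q x)^2 ≤ L^2 := by
          rw [← sq_abs]
          exact pow_le_pow_left₀ (abs_nonneg _) hux 2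
        have hco : (3 * (TP N p q x)^2 - 1)^2 ≤ (3*L^2+1)^2 := by
          have h1 : |3 * (TP N p q x)^2 - 1| ≤ 3*L^2+1 := by
            rw [abs_le]
            constructor <;> nlinarith [sq_nonneg (TP N p q x)]
          calc (3 * (TP N p q x)^2 - 1)^2 = |3 * (TP N p q x)^2 - 1|^2 := (sq_abs _).symm
            _ ≤ (3*L^2+1)^2 := pow_le_pow_left₀ (abs_nonneg _) h1 2
        have e : ((3 * (TP N p q x)^2 - 1) * TP N (fun k => (k.1:ℝ) * q k) (fun k => -(k.1:ℝ) * p k) x)^2 +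
            ((3 * (TP N p q x)^2 - 1) * TP N (fun k => (k.2:ℝ) * q k) (fun k => -(k.2:ℝ) * p k) x)^2 =
            (3 * (TP N p q x)^2 - 1)^2 *
            ((TP N (fun k => (k.1:ℝ) * q k) (fun k => -(k.1:ℝ) * p k) x)^2 +
             (TP N (fun k => (k.2:ℝ) * q k) (fun k => -(k.2:ℝ) * p k) x)^2) := by ring
        rw [e]
        apply mul_le_mul_of_nonneg_right hco
        positivity
    have hH1p' : H1sq (TP N p q) = ∫ x in torusBox,
        ((TP N (fun k => (k.1:ℝ) * q k) (fun k => -(k.1:ℝ) * p k) x)^2 +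
         (TP N (fun k => (k.2:ℝ) * q k) (fun k => -(k.2:ℝ) * p k) x)^2) := by
      unfold H1sq
      rw [pd1_TP, pd2_TP]
    have hH1F' : H1sq F = ∫ x in torusBox,
        (((3 * (TP N p q x)^2 - 1) * TP N (fun k => (k.1:ℝ) * q k) (fun k => -(k.1:ℝ) * p k) x)^2 +
         ((3 * (TP N p q x)^2 - 1) * TP N (fun k => (k.2:ℝ) * q k) (fun k => -(k.2:ℝ) * p k) x)^2) := by
      unfold H1sq
      rw [hpd1F, hpd2F]
    rw [hH1F', hH1p', ← MeasureTheory.integral_const_mul]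
    exact hmono
  -- ============ Step D: projection estimate ============
  have hlapTP : IsTrigPoly N (lap (TP N c d)) := by
    refine ⟨fun k => -(wt k) * c k, fun k => -(wt k) * d k, ?_, ?_⟩
    · intro k hk
      obtain ⟨h1, h2⟩ := hc0 k hk
      constructor <;> simp [h1, h2]
    · intro x
      rw [hl3]
      rfl
  have horth := hproj (lap (TP N c d)) hlapTP
  -- H1sq w = - ∫ w lap w via IBP
  have hDw : ∀ x, HasFDerivAt (TP N c d)
      (∑ k ∈ KK N, ((- c k * Real.sin (ph k x) + d k * Real.cos (ph k x)) • phL k)) x :=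
    fun x => hasFDerivAt_TP N c d x
  have hDw1 : (fun x => (∑ k ∈ KK N,
      ((- c k * Real.sin (ph k x) + d k * Real.cos (ph k x)) • phL k)) (1, 0)) = pd1 (TP N c d) := by
    funext x
    rw [pd1, (hasFDerivAt_TP N c d x).fderiv]
  have hDw2 : (fun x => (∑ k ∈ KK N,
      ((- c k * Real.sin (ph k x) + d k * Real.cos (ph k x)) • phL k)) (0, 1)) = pd2 (TP N c d) := by
    funext x
    rw [pd2, (hasFDerivAt_TP N c d x).fderiv]
  have hIBPw := IBP_grad N (TP N c d) _ hDw (continuous_TP N c d)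
    (by rw [hDw1, pd1_TP]; exact continuous_TP _ _ _)
    (by rw [hDw2, pd2_TP]; exact continuous_TP _ _ _)
    (TP_per1 N c d) (TP_per2 N c d) c d
  have hH1w_eq : H1sq (TP N c d) = - ∫ x in torusBox, TP N c d x * lap (TP N c d) x := by
    rw [← hIBPw]
    unfold H1sq
    apply MeasureTheory.setIntegral_congr_fun measurableSet_Icc
    intro x _
    have e1 : (∑ k ∈ KK N, ((- c k * Real.sin (ph k x) + d k * Real.cos (ph k x)) • phL k)) (1, 0) =
        pd1 (TP N c d) x := by rw [pd1, (hasFDerivAt_TP N c d x).fderiv]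
    have e2 : (∑ k ∈ KK N, ((- c k * Real.sin (ph k x) + d k * Real.cos (ph k x)) • phL k)) (0, 1) =
        pd2 (TP N c d) x := by rw [pd2, (hasFDerivAt_TP N c d x).fderiv]
    beta_reduce
    rw [e1, e2]
    ring
  -- IBP for F
  have hDF : ∀ x, HasFDerivAt F ((3 * (TP N p q x)^2 - 1) •
      (∑ k ∈ KK N, ((- p k * Real.sin (ph k x) + q k * Real.cos (ph k x)) • phL k))) x :=
    fun x => hasFDerivAt_cube N p q x
  have hDF1 : (fun x => ((3 * (TP N p q x)^2 - 1) •
      (∑ k ∈ KK N, ((- p k * Real.sin (ph k x) + q k * Real.cos (ph k x)) • phL k))) (1, 0)) =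
      pd1 F := by
    funext x
    rw [pd1, (hasFDerivAt_cube N p q x).fderiv]
  have hDF2 : (fun x => ((3 * (TP N p q x)^2 - 1) •
      (∑ k ∈ KK N, ((- p k * Real.sin (ph k x) + q k * Real.cos (ph k x)) • phL k))) (0, 1)) =
      pd2 F := by
    funext x
    rw [pd2, (hasFDerivAt_cube N p q x).fderiv]
  have hFper1 : ∀ x : ℝ × ℝ, F (x.1 + 2*π, x.2) = F x := by
    intro x
    simp only [hF]
    rw [TP_per1]
  have hFper2 : ∀ x : ℝ × ℝ, F (x.1, x.2 + 2*π) = F x := by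
    intro x
    simp only [hF]
    rw [TP_per2]
  have hIBPF := IBP_grad N F _ hDF hFc
    (by rw [hDF1, hpd1F]
        exact ((continuous_const.mul ((continuous_TP N p q).pow 2)).sub continuous_const).mul
          (continuous_TP _ _ _))
    (by rw [hDF2, hpd2F]
        exact ((continuous_const.mul ((continuous_TP N p q).pow 2)).sub continuous_const).mul
          (continuous_TP _ _ _))
    hFper1 hFper2 c d
  -- from the projection property: ∫ w lap w = ∫ F lap w
  have hsplit : ∫ x in torusBox, (TP N c d x - F x) * lap (TP N c d) x =
      (∫ x in torusBox, TP N c d x * lap (TP N c d) x) -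
      ∫ x in torusBox, F x * lap (TP N c d) x := by
    have hlapc : Continuous (lap (TP N c d)) := by
      rw [hl3]; exact continuous_TP _ _ _
    rw [← MeasureTheory.integral_sub (f := fun x => TP N c d x * lap (TP N c d) x)
      (g := fun x => F x * lap (TP N c d) x) (integrableOn_box ((continuous_TP N c d).mul hlapc))
      (integrableOn_box (hFc.mul hlapc))]
    apply MeasureTheory.setIntegral_congr_fun measurableSet_Icc
    intro x _
    ring
  have hWF : ∫ x in torusBox, TP N c d x * lap (TP N c d) x =
      ∫ x in torusBox, F x * lap (TP N c d) x := by
    have := horth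
    rw [hsplit] at this
    linarith
  -- combine: H1sq w = ∫ ∇F · ∇w
  have hgradFw : H1sq (TP N c d) = ∫ x in torusBox,
      (pd1 F x * pd1 (TP N c d) x + pd2 F x * pd2 (TP N c d) x) := by
    rw [hH1w_eq, hWF, ← hIBPF]
    apply MeasureTheory.setIntegral_congr_fun measurableSet_Icc
    intro x _
    have e1 : ((3 * (TP N p q x)^2 - 1) •
        (∑ k ∈ KK N, ((- p k * Real.sin (ph k x) + q k * Real.cos (ph k x)) • phL k))) (1, 0) =
        pd1 F x := by rw [pd1, (hasFDerivAt_cube N p q x).fderiv]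
    have e2 : ((3 * (TP N p q x)^2 - 1) •
        (∑ k ∈ KK N, ((- p k * Real.sin (ph k x) + q k * Real.cos (ph k x)) • phL k))) (0, 1) =
        pd2 F x := by rw [pd2, (hasFDerivAt_cube N p q x).fderiv]
    beta_reduce
    rw [e1, e2]
  -- Cauchy-Schwarz
  have hCS : H1sq (TP N c d) ≤ Real.sqrt (H1sq F) * Real.sqrt (H1sq (TP N c d)) := by
    have hc1 : Continuous (pd1 F) := by
      rw [hpd1F]
      exact ((continuous_const.mul ((continuous_TP N p q).pow 2)).sub continuous_const).mul
        (continuous_TP _ _ _)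
    have hc2 : Continuous (pd2 F) := by
      rw [hpd2F]
      exact ((continuous_const.mul ((continuous_TP N p q).pow 2)).sub continuous_const).mul
        (continuous_TP _ _ _)
    have hc3 : Continuous (pd1 (TP N c d)) := by rw [pd1_TP]; exact continuous_TP _ _ _
    have hc4 : Continuous (pd2 (TP N c d)) := by rw [pd2_TP]; exact continuous_TP _ _ _
    have hcs2 := integral_CS2 (pd1 F) (pd2 F) (pd1 (TP N c d)) (pd2 (TP N c d)) hc1 hc2 hc3 hc4
    calc H1sq (TP N c d)
        = ∫ x in torusBox, (pd1 F x * pd1 (TP N c d) x + pd2 F x * pd2 (TP N c d) x) := hgradFw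
      _ ≤ Real.sqrt (∫ x in torusBox, ((pd1 F x)^2 + (pd2 F x)^2)) *
          Real.sqrt (∫ x in torusBox, ((pd1 (TP N c d) x)^2 + (pd2 (TP N c d) x)^2)) := hcs2
      _ = Real.sqrt (H1sq F) * Real.sqrt (H1sq (TP N c d)) := rfl
  have hwF : Real.sqrt (H1sq (TP N c d)) ≤ Real.sqrt (H1sq F) := by
    set z := Real.sqrt (H1sq (TP N c d)) with hz
    have hznn : 0 ≤ z := Real.sqrt_nonneg _
    have hzsq : z^2 = H1sq (TP N c d) := Real.sq_sqrt (H1sq_nonneg _)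
    by_cases hz0 : z = 0
    · rw [hz0]; exact Real.sqrt_nonneg _
    · have hzpos : 0 < z := lt_of_le_of_ne hznn (Ne.symm hz0)
      have : z * z ≤ Real.sqrt (H1sq F) * z := by
        calc z * z = H1sq (TP N c d) := by rw [← hzsq]; ring
          _ ≤ Real.sqrt (H1sq F) * z := hCS
      exact le_of_mul_le_mul_right (by linarith [this]) hzpos
  have hFbound : Real.sqrt (H1sq F) ≤ (3*L^2+1) * Real.sqrt (H1sq (TP N p q)) := by
    calc Real.sqrt (H1sq F) ≤ Real.sqrt ((3*L^2+1)^2 * H1sq (TP N p q)) := Real.sqrt_le_sqrt hHF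
      _ = (3*L^2+1) * Real.sqrt (H1sq (TP N p q)) := by
        rw [Real.sqrt_mul (by positivity), Real.sqrt_sq (by positivity)]
  -- ============ Step E: final assembly ============
  calc Real.sqrt (H1sq (TP N r s)) ≤
      Real.sqrt (H1sq (TP N p q)) + (1/A) * Real.sqrt (H1sq (TP N c d)) := htri
    _ ≤ Real.sqrt (H1sq (TP N p q)) + (1/A) * ((3*L^2+1) * Real.sqrt (H1sq (TP N p q))) := by
        apply add_le_add le_rfl
        apply mul_le_mul_of_nonneg_left _ (by positivity)
        exact hwF.trans hFbound
    _ = (1 + 1/A + (3/A) * L^2) * Real.sqrt (H1sq (TP N p q)) := by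
        ring

end
end

section
/- Let u^n, u^{n+1} ∈ X_N be mean-zero trigonometric polynomials satisfying (u^{n+1}-u^n)/τ = -νΔ²u^{n+1} + AΔ(u^{n+1}-u^n) + ΔΠ_N f(u^n), with f(u)=u³-u. Then with E(u) = ∫_{𝕋²}((ν/2)|∇u|² + (1/4)(u²-1)²)dx, E(u^{n+1}) - E(u^n) + (A + 1/2 + √(2ν/τ))||u^{n+1}-u^n||₂² ≤ ||u^{n+1}-u^n||₂² · (||u^n||_∞² + (1/2)||u^{n+1}||_∞²). -/
open MeasureTheory

noncomputable section

def cK (k : ℤ × ℤ) : ℝ × ℝ → ℝ := fun x => Real.cos ((k.1 : ℝ) * x.1 + (k.2 : ℝ) * x.2)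
def sK (k : ℤ × ℤ) : ℝ × ℝ → ℝ := fun x => Real.sin ((k.1 : ℝ) * x.1 + (k.2 : ℝ) * x.2)

def linK (k : ℤ × ℤ) : ℝ × ℝ →L[ℝ] ℝ :=
  (k.1 : ℝ) • (ContinuousLinearMap.fst ℝ ℝ ℝ) + (k.2 : ℝ) • (ContinuousLinearMap.snd ℝ ℝ ℝ)

lemma linK_apply (k : ℤ × ℤ) (x : ℝ × ℝ) : linK k x = (k.1 : ℝ) * x.1 + (k.2 : ℝ) * x.2 := by
  simp [linK]

lemma hasFDerivAt_cK (k : ℤ × ℤ) (x : ℝ × ℝ) :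
    HasFDerivAt (cK k) (-(sK k x • linK k)) x := by
  have h1 : HasFDerivAt (fun y : ℝ × ℝ => (k.1 : ℝ) * y.1 + (k.2 : ℝ) * y.2) (linK k) x := by
    rw [show (fun y : ℝ × ℝ => (k.1 : ℝ) * y.1 + (k.2 : ℝ) * y.2) = linK k from
      funext fun y => (linK_apply k y).symm]
    exact (linK k).hasFDerivAt (x := x)
  have h2 := (Real.hasDerivAt_cos ((k.1 : ℝ) * x.1 + (k.2 : ℝ) * x.2)).comp_hasFDerivAt x h1
  rw [neg_smul] at h2
  exact h2

lemma hasFDerivAt_sK (k : ℤ × ℤ) (x : ℝ × ℝ) :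
    HasFDerivAt (sK k) ((cK k x) • linK k) x := by
  have h1 : HasFDerivAt (fun y : ℝ × ℝ => (k.1 : ℝ) * y.1 + (k.2 : ℝ) * y.2) (linK k) x := by
    rw [show (fun y : ℝ × ℝ => (k.1 : ℝ) * y.1 + (k.2 : ℝ) * y.2) = linK k from
      funext fun y => (linK_apply k y).symm]
    exact (linK k).hasFDerivAt (x := x)
  have h2 := (Real.hasDerivAt_sin ((k.1 : ℝ) * x.1 + (k.2 : ℝ) * x.2)).comp_hasFDerivAt x h1
  exact h2

def BN (N : ℕ) : Finset (ℤ × ℤ) := Finset.Icc (-(N : ℤ), -(N : ℤ)) ((N : ℤ), (N : ℤ))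

def trg (N : ℕ) (a b : ℤ × ℤ → ℝ) : ℝ × ℝ → ℝ :=
  fun x => ∑ k ∈ BN N, (a k * cK k x + b k * sK k x)

lemma hasFDerivAt_trg (N : ℕ) (a b : ℤ × ℤ → ℝ) (x : ℝ × ℝ) :
    HasFDerivAt (trg N a b)
      (∑ k ∈ BN N, (a k • -(sK k x • linK k) + b k • (cK k x • linK k))) x := by
  unfold trg
  apply HasFDerivAt.fun_sum
  intro k _
  exact ((hasFDerivAt_cK k x).const_mul (a k)).add ((hasFDerivAt_sK k x).const_mul (b k))


lemma contDiff_cK (k : ℤ × ℤ) : ContDiff ℝ ⊤ (cK k) := by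
  have h : ContDiff ℝ ⊤ (fun x : ℝ × ℝ => (k.1 : ℝ) * x.1 + (k.2 : ℝ) * x.2) := by fun_prop
  exact Real.contDiff_cos.comp h
lemma contDiff_sK (k : ℤ × ℤ) : ContDiff ℝ ⊤ (sK k) := by
  have h : ContDiff ℝ ⊤ (fun x : ℝ × ℝ => (k.1 : ℝ) * x.1 + (k.2 : ℝ) * x.2) := by fun_prop
  exact Real.contDiff_sin.comp h
lemma contDiff_trg (N : ℕ) (a b : ℤ × ℤ → ℝ) : ContDiff ℝ ⊤ (trg N a b) := by
  unfold trg
  apply ContDiff.sum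
  intro k _
  exact ((contDiff_cK k).const_smul (a k)).add ((contDiff_sK k).const_smul (b k))

lemma pd1_trg (N : ℕ) (a b : ℤ × ℤ → ℝ) :
    pd1 (trg N a b) = trg N (fun k => (k.1 : ℝ) * b k) (fun k => -(k.1 : ℝ) * a k) := by
  funext x
  have h := (hasFDerivAt_trg N a b x).fderiv
  simp only [pd1, h]
  rw [ContinuousLinearMap.sum_apply]
  unfold trg
  apply Finset.sum_congr rfl
  intro k _
  simp [linK_apply]
  ring

lemma pd2_trg (N : ℕ) (a b : ℤ × ℤ → ℝ) :
    pd2 (trg N a b) = trg N (fun k => (k.2 : ℝ) * b k) (fun k => -(k.2 : ℝ) * a k) := by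
  funext x
  have h := (hasFDerivAt_trg N a b x).fderiv
  simp only [pd2, h]
  rw [ContinuousLinearMap.sum_apply]
  unfold trg
  apply Finset.sum_congr rfl
  intro k _
  simp [linK_apply]
  ring

lemma trg_congr_coeff (N : ℕ) {a b a' b' : ℤ × ℤ → ℝ}
    (ha : ∀ k, a k = a' k) (hb : ∀ k, b k = b' k) : trg N a b = trg N a' b' := by
  funext x; unfold trg; exact Finset.sum_congr rfl (fun k _ => by rw [ha, hb])

lemma lap_trg (N : ℕ) (a b : ℤ × ℤ → ℝ) :
    lap (trg N a b) = trg N (fun k => -((k.1 : ℝ) ^ 2 + (k.2 : ℝ) ^ 2) * a k)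
      (fun k => -((k.1 : ℝ) ^ 2 + (k.2 : ℝ) ^ 2) * b k) := by
  funext x
  have h1 : pd1 (pd1 (trg N a b)) = trg N (fun k => (-(k.1:ℝ)^2) * a k) (fun k => (-(k.1:ℝ)^2) * b k) := by
    rw [pd1_trg, pd1_trg]
    exact trg_congr_coeff N (fun k => by ring) (fun k => by ring)
  have h2 : pd2 (pd2 (trg N a b)) = trg N (fun k => (-(k.2:ℝ)^2) * a k) (fun k => (-(k.2:ℝ)^2) * b k) := by
    rw [pd2_trg, pd2_trg]
    exact trg_congr_coeff N (fun k => by ring) (fun k => by ring)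
  simp only [lap, h1, h2]
  unfold trg
  rw [← Finset.sum_add_distrib]
  apply Finset.sum_congr rfl
  intro k _
  ring


/-- Smooth and `2π`-periodic in each variable. -/
def Nice (u : ℝ × ℝ → ℝ) : Prop :=
  ContDiff ℝ ⊤ u ∧ (∀ x : ℝ × ℝ, u (x.1 + 2 * Real.pi, x.2) = u x) ∧
    (∀ x : ℝ × ℝ, u (x.1, x.2 + 2 * Real.pi) = u x)

lemma nice_trg (N : ℕ) (a b : ℤ × ℤ → ℝ) : Nice (trg N a b) := by
  refine ⟨contDiff_trg N a b, fun x => ?_, fun x => ?_⟩ <;>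
  · unfold trg
    apply Finset.sum_congr rfl
    intro k _
    have hc : ∀ y : ℝ × ℝ, cK k y = Real.cos ((k.1:ℝ)*y.1 + (k.2:ℝ)*y.2) := fun _ => rfl
    have hs : ∀ y : ℝ × ℝ, sK k y = Real.sin ((k.1:ℝ)*y.1 + (k.2:ℝ)*y.2) := fun _ => rfl
    simp only [hc, hs]
    first
    | rw [show (k.1:ℝ) * (x.1 + 2*Real.pi) + (k.2:ℝ)*x.2
          = ((k.1:ℝ)*x.1 + (k.2:ℝ)*x.2) + (k.1:ℤ) * (2*Real.pi) by push_cast; ring]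
    | rw [show (k.1:ℝ) * x.1 + (k.2:ℝ)*(x.2 + 2*Real.pi)
          = ((k.1:ℝ)*x.1 + (k.2:ℝ)*x.2) + (k.2:ℤ) * (2*Real.pi) by push_cast; ring]
    rw [Real.cos_add_int_mul_two_pi, Real.sin_add_int_mul_two_pi]

lemma Nice.contDiff {u} (h : Nice u) : ContDiff ℝ ⊤ u := h.1
lemma Nice.continuous {u} (h : Nice u) : Continuous u := h.1.continuous

lemma Nice.diff {u} (h : Nice u) : Differentiable ℝ u := h.1.differentiable (by simp)

lemma periodic_fderiv {u : ℝ × ℝ → ℝ} (hd : Differentiable ℝ u) (c : ℝ × ℝ)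
    (h : ∀ x, u (x + c) = u x) (x : ℝ × ℝ) : fderiv ℝ u (x + c) = fderiv ℝ u x := by
  have h1 : HasFDerivAt (fun y => u (y + c)) (fderiv ℝ u (x + c)) x := by
    have h2 := HasFDerivAt.comp x (hd (x + c)).hasFDerivAt ((hasFDerivAt_id x).add_const c)
    simpa [Function.comp_def] using h2
  have hg : (fun y => u (y + c)) = u := funext h
  rw [hg] at h1
  exact (h1.fderiv).symm

lemma Nice.per1' {u} (h : Nice u) : ∀ x : ℝ × ℝ, u (x + (2 * Real.pi, 0)) = u x := by
  intro x
  have hx : x + ((2 * Real.pi, 0) : ℝ × ℝ) = (x.1 + 2 * Real.pi, x.2) := by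
    apply Prod.ext <;> simp
  rw [hx]; exact h.2.1 x

lemma Nice.per2' {u} (h : Nice u) : ∀ x : ℝ × ℝ, u (x + (0, 2 * Real.pi)) = u x := by
  intro x
  have hx : x + ((0, 2 * Real.pi) : ℝ × ℝ) = (x.1, x.2 + 2 * Real.pi) := by
    apply Prod.ext <;> simp
  rw [hx]; exact h.2.2 x

lemma Nice.pdi {u} (h : Nice u) (v : ℝ × ℝ) : Nice (fun x => fderiv ℝ u x v) := by
  refine ⟨?_, ?_, ?_⟩
  · exact (h.1.fderiv_right (le_of_eq rfl)).clm_apply contDiff_const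
  · intro x
    change fderiv ℝ u (x.1 + 2 * Real.pi, x.2) v = fderiv ℝ u x v
    have hx : ((x.1 + 2 * Real.pi, x.2) : ℝ × ℝ) = x + (2 * Real.pi, 0) := by
      apply Prod.ext <;> simp
    rw [hx, periodic_fderiv h.diff _ h.per1' x]
  · intro x
    change fderiv ℝ u (x.1, x.2 + 2 * Real.pi) v = fderiv ℝ u x v
    have hx : ((x.1, x.2 + 2 * Real.pi) : ℝ × ℝ) = x + (0, 2 * Real.pi) := by
      apply Prod.ext <;> simp
    rw [hx, periodic_fderiv h.diff _ h.per2' x]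

lemma Nice.pd1 {u} (h : Nice u) : Nice (pd1 u) := h.pdi (1, 0)
lemma Nice.pd2 {u} (h : Nice u) : Nice (pd2 u) := h.pdi (0, 1)

lemma Nice.add {u v} (hu : Nice u) (hv : Nice v) : Nice (fun x => u x + v x) :=
  ⟨hu.1.add hv.1,
    fun x => by change u _ + v _ = u x + v x; rw [hu.2.1 x, hv.2.1 x],
    fun x => by change u _ + v _ = u x + v x; rw [hu.2.2 x, hv.2.2 x]⟩
lemma Nice.sub {u v} (hu : Nice u) (hv : Nice v) : Nice (fun x => u x - v x) :=
  ⟨hu.1.sub hv.1,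
    fun x => by change u _ - v _ = u x - v x; rw [hu.2.1 x, hv.2.1 x],
    fun x => by change u _ - v _ = u x - v x; rw [hu.2.2 x, hv.2.2 x]⟩
lemma Nice.mul {u v} (hu : Nice u) (hv : Nice v) : Nice (fun x => u x * v x) :=
  ⟨hu.1.mul hv.1,
    fun x => by change u _ * v _ = u x * v x; rw [hu.2.1 x, hv.2.1 x],
    fun x => by change u _ * v _ = u x * v x; rw [hu.2.2 x, hv.2.2 x]⟩
lemma Nice.const_mul {u} (hu : Nice u) (c : ℝ) : Nice (fun x => c * u x) := by
  have hc : ContDiff ℝ ⊤ (fun x => c * u x) := by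
    simpa [smul_eq_mul] using hu.1.const_smul c
  exact ⟨hc,
    fun x => by change c * u _ = c * u x; rw [hu.2.1 x],
    fun x => by change c * u _ = c * u x; rw [hu.2.2 x]⟩

lemma Nice.lap {u} (h : Nice u) : Nice (lap u) := h.pd1.pd1.add h.pd2.pd2

lemma pd_add {u v : ℝ × ℝ → ℝ} (hu : Differentiable ℝ u) (hv : Differentiable ℝ v)
    (e : ℝ × ℝ) (x : ℝ × ℝ) :
    fderiv ℝ (fun y => u y + v y) x e = fderiv ℝ u x e + fderiv ℝ v x e := by
  rw [fderiv_fun_add (hu x) (hv x)]; rfl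

lemma pd_sub {u v : ℝ × ℝ → ℝ} (hu : Differentiable ℝ u) (hv : Differentiable ℝ v)
    (e : ℝ × ℝ) (x : ℝ × ℝ) :
    fderiv ℝ (fun y => u y - v y) x e = fderiv ℝ u x e - fderiv ℝ v x e := by
  rw [fderiv_fun_sub (hu x) (hv x)]; rfl

lemma pd_const_mul {u : ℝ × ℝ → ℝ} (hu : Differentiable ℝ u) (c : ℝ)
    (e : ℝ × ℝ) (x : ℝ × ℝ) :
    fderiv ℝ (fun y => c * u y) x e = c * fderiv ℝ u x e := by
  rw [fderiv_const_mul (hu x)]; rfl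

lemma pd1_add' {u v : ℝ × ℝ → ℝ} (hu : Nice u) (hv : Nice v) :
    pd1 (fun y => u y + v y) = fun x => pd1 u x + pd1 v x :=
  funext fun x => pd_add hu.diff hv.diff (1, 0) x
lemma pd2_add' {u v : ℝ × ℝ → ℝ} (hu : Nice u) (hv : Nice v) :
    pd2 (fun y => u y + v y) = fun x => pd2 u x + pd2 v x :=
  funext fun x => pd_add hu.diff hv.diff (0, 1) x
lemma pd1_sub' {u v : ℝ × ℝ → ℝ} (hu : Nice u) (hv : Nice v) :
    pd1 (fun y => u y - v y) = fun x => pd1 u x - pd1 v x :=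
  funext fun x => pd_sub hu.diff hv.diff (1, 0) x
lemma pd2_sub' {u v : ℝ × ℝ → ℝ} (hu : Nice u) (hv : Nice v) :
    pd2 (fun y => u y - v y) = fun x => pd2 u x - pd2 v x :=
  funext fun x => pd_sub hu.diff hv.diff (0, 1) x
lemma pd1_const_mul' {u : ℝ × ℝ → ℝ} (hu : Nice u) (c : ℝ) :
    pd1 (fun y => c * u y) = fun x => c * pd1 u x :=
  funext fun x => pd_const_mul hu.diff c (1, 0) x
lemma pd2_const_mul' {u : ℝ × ℝ → ℝ} (hu : Nice u) (c : ℝ) :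
    pd2 (fun y => c * u y) = fun x => c * pd2 u x :=
  funext fun x => pd_const_mul hu.diff c (0, 1) x

lemma lap_add' {u v : ℝ × ℝ → ℝ} (hu : Nice u) (hv : Nice v) :
    lap (fun y => u y + v y) = fun x => lap u x + lap v x := by
  funext x
  show pd1 (pd1 (fun y => u y + v y)) x + pd2 (pd2 (fun y => u y + v y)) x = _
  rw [pd1_add' hu hv, pd2_add' hu hv, pd1_add' hu.pd1 hv.pd1, pd2_add' hu.pd2 hv.pd2]
  show _ = pd1 (pd1 u) x + pd2 (pd2 u) x + (pd1 (pd1 v) x + pd2 (pd2 v) x)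
  ring

lemma lap_sub' {u v : ℝ × ℝ → ℝ} (hu : Nice u) (hv : Nice v) :
    lap (fun y => u y - v y) = fun x => lap u x - lap v x := by
  funext x
  show pd1 (pd1 (fun y => u y - v y)) x + pd2 (pd2 (fun y => u y - v y)) x = _
  rw [pd1_sub' hu hv, pd2_sub' hu hv, pd1_sub' hu.pd1 hv.pd1, pd2_sub' hu.pd2 hv.pd2]
  show _ = pd1 (pd1 u) x + pd2 (pd2 u) x - (pd1 (pd1 v) x + pd2 (pd2 v) x)
  ring

lemma lap_const_mul' {u : ℝ × ℝ → ℝ} (hu : Nice u) (c : ℝ) :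
    lap (fun y => c * u y) = fun x => c * lap u x := by
  funext x
  show pd1 (pd1 (fun y => c * u y)) x + pd2 (pd2 (fun y => c * u y)) x = _
  rw [pd1_const_mul' hu c, pd2_const_mul' hu c, pd1_const_mul' hu.pd1 c, pd2_const_mul' hu.pd2 c]
  show _ = c * (pd1 (pd1 u) x + pd2 (pd2 u) x)
  ring

lemma IsTrigPoly.exists_trg {N : ℕ} {u : ℝ × ℝ → ℝ} (h : IsTrigPoly N u) :
    ∃ a b : ℤ × ℤ → ℝ, u = trg N a b := by
  obtain ⟨a, b, -, hrep⟩ := h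
  exact ⟨a, b, funext hrep⟩

lemma IsTrigPoly.nice {N : ℕ} {u : ℝ × ℝ → ℝ} (h : IsTrigPoly N u) : Nice u := by
  obtain ⟨a, b, rfl⟩ := h.exists_trg
  exact nice_trg N a b

lemma IsTrigPoly.sub {N : ℕ} {u v : ℝ × ℝ → ℝ} (hu : IsTrigPoly N u) (hv : IsTrigPoly N v) :
    IsTrigPoly N (fun x => u x - v x) := by
  obtain ⟨a, b, hcut, hrep⟩ := hu
  obtain ⟨a', b', hcut', hrep'⟩ := hv
  refine ⟨fun k => a k - a' k, fun k => b k - b' k, fun k hk => ?_, fun x => ?_⟩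
  · simp only []
    rw [(hcut k hk).1, (hcut' k hk).1, (hcut k hk).2, (hcut' k hk).2]
    simp
  · show u x - v x = _
    rw [hrep x, hrep' x, ← Finset.sum_sub_distrib]
    apply Finset.sum_congr rfl
    intro k _
    ring

lemma trg_bddAbove (N : ℕ) (a b : ℤ × ℤ → ℝ) :
    BddAbove (Set.range fun x => |trg N a b x|) := by
  refine ⟨∑ k ∈ BN N, (|a k| + |b k|), ?_⟩
  rintro y ⟨x, rfl⟩
  calc |trg N a b x| ≤ ∑ k ∈ BN N, |a k * cK k x + b k * sK k x| :=
        Finset.abs_sum_le_sum_abs _ _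
    _ ≤ ∑ k ∈ BN N, (|a k| + |b k|) := by
        apply Finset.sum_le_sum
        intro k _
        refine (abs_add_le _ _).trans (add_le_add ?_ ?_)
        · rw [abs_mul]
          calc |a k| * |cK k x| ≤ |a k| * 1 := by
                exact mul_le_mul_of_nonneg_left (Real.abs_cos_le_one _) (abs_nonneg _)
            _ = |a k| := mul_one _
        · rw [abs_mul]
          calc |b k| * |sK k x| ≤ |b k| * 1 := by
                exact mul_le_mul_of_nonneg_left (Real.abs_sin_le_one _) (abs_nonneg _)
            _ = |b k| := mul_one _

lemma IsTrigPoly.abs_le_Linf {N : ℕ} {u : ℝ × ℝ → ℝ} (h : IsTrigPoly N u) (x : ℝ × ℝ) :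
    |u x| ≤ Linf u := by
  obtain ⟨a, b, rfl⟩ := h.exists_trg
  exact le_ciSup (trg_bddAbove N a b) x

lemma integOn {F : ℝ × ℝ → ℝ} (hF : Continuous F) : IntegrableOn F torusBox := by
  exact hF.continuousOn.integrableOn_compact isCompact_Icc

lemma torusBox_prod :
    torusBox = (Set.Icc (0:ℝ) (2*Real.pi)) ×ˢ (Set.Icc (0:ℝ) (2*Real.pi)) := by
  rw [torusBox, Set.Icc_prod_eq]

lemma slice1 {h : ℝ × ℝ → ℝ} (hn : Nice h) (x2 : ℝ) :
    ∫ t in Set.Icc (0:ℝ) (2*Real.pi), pd1 h (t, x2) = 0 := by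
  have hd : ∀ t : ℝ, HasDerivAt (fun s => h (s, x2)) (pd1 h (t, x2)) t := by
    intro t
    have hγ : HasDerivAt (fun s : ℝ => (s, x2)) ((1:ℝ), (0:ℝ)) t :=
      (hasDerivAt_id t).prodMk (hasDerivAt_const t x2)
    have := (hn.diff (t, x2)).hasFDerivAt.comp_hasDerivAt t hγ
    simpa [Function.comp_def, pd1] using this
  have hcont : Continuous (fun t => pd1 h (t, x2)) :=
    hn.pd1.continuous.comp (continuous_id.prodMk continuous_const)
  have h2 : (0:ℝ) ≤ 2 * Real.pi := by positivity
  rw [MeasureTheory.integral_Icc_eq_integral_Ioc, ← intervalIntegral.integral_of_le h2]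
  rw [intervalIntegral.integral_eq_sub_of_hasDerivAt (fun t _ => hd t)
    (hcont.intervalIntegrable _ _)]
  have := hn.2.1 (0, x2)
  simp only [zero_add] at this
  simp [this]

lemma slice2 {h : ℝ × ℝ → ℝ} (hn : Nice h) (x1 : ℝ) :
    ∫ t in Set.Icc (0:ℝ) (2*Real.pi), pd2 h (x1, t) = 0 := by
  have hd : ∀ t : ℝ, HasDerivAt (fun s => h (x1, s)) (pd2 h (x1, t)) t := by
    intro t
    have hγ : HasDerivAt (fun s : ℝ => (x1, s)) ((0:ℝ), (1:ℝ)) t :=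
      (hasDerivAt_const t x1).prodMk (hasDerivAt_id t)
    have := (hn.diff (x1, t)).hasFDerivAt.comp_hasDerivAt t hγ
    simpa [Function.comp_def, pd2] using this
  have hcont : Continuous (fun t => pd2 h (x1, t)) :=
    hn.pd2.continuous.comp (continuous_const.prodMk continuous_id)
  have h2 : (0:ℝ) ≤ 2 * Real.pi := by positivity
  rw [MeasureTheory.integral_Icc_eq_integral_Ioc, ← intervalIntegral.integral_of_le h2]
  rw [intervalIntegral.integral_eq_sub_of_hasDerivAt (fun t _ => hd t)
    (hcont.intervalIntegrable _ _)]
  have := hn.2.2 (x1, 0)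
  simp only [zero_add] at this
  simp [this]

lemma integral_pd1_eq_zero {h : ℝ × ℝ → ℝ} (hn : Nice h) :
    ∫ x in torusBox, pd1 h x = 0 := by
  have hint : IntegrableOn (pd1 h) torusBox := integOn hn.pd1.continuous
  rw [torusBox_prod] at hint ⊢
  have hvol : (volume : Measure (ℝ × ℝ)) = (volume : Measure ℝ).prod volume :=
    Measure.volume_eq_prod ℝ ℝ
  rw [hvol] at hint ⊢
  unfold IntegrableOn at hint
  rw [← Measure.prod_restrict] at hint
  have key : (∫ z in (Set.Icc (0:ℝ) (2*Real.pi)) ×ˢ (Set.Icc (0:ℝ) (2*Real.pi)), pd1 h z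
      ∂((volume : Measure ℝ).prod volume))
      = ∫ z, pd1 h z ∂(((volume : Measure ℝ).restrict (Set.Icc 0 (2*Real.pi))).prod
        ((volume : Measure ℝ).restrict (Set.Icc 0 (2*Real.pi)))) := by
    rw [Measure.prod_restrict]
  rw [key, MeasureTheory.integral_prod_symm _ hint]
  have hz : ∀ x2 : ℝ, (∫ t in Set.Icc (0:ℝ) (2*Real.pi), pd1 h (t, x2)) = 0 := slice1 hn
  simp [hz]

lemma integral_pd2_eq_zero {h : ℝ × ℝ → ℝ} (hn : Nice h) :
    ∫ x in torusBox, pd2 h x = 0 := by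
  have hint : IntegrableOn (pd2 h) torusBox := integOn hn.pd2.continuous
  rw [torusBox_prod] at hint ⊢
  have hvol : (volume : Measure (ℝ × ℝ)) = (volume : Measure ℝ).prod volume :=
    Measure.volume_eq_prod ℝ ℝ
  rw [hvol] at hint ⊢
  rw [MeasureTheory.setIntegral_prod _ hint]
  have hz : ∀ x1 : ℝ, (∫ t in Set.Icc (0:ℝ) (2*Real.pi), pd2 h (x1, t)) = 0 := slice2 hn
  simp [hz]

lemma setInt_add {F G : ℝ × ℝ → ℝ} (hF : Continuous F) (hG : Continuous G) :
    ∫ x in torusBox, (F x + G x) = (∫ x in torusBox, F x) + ∫ x in torusBox, G x :=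
  MeasureTheory.integral_add (integOn hF) (integOn hG)

lemma setInt_sub {F G : ℝ × ℝ → ℝ} (hF : Continuous F) (hG : Continuous G) :
    ∫ x in torusBox, (F x - G x) = (∫ x in torusBox, F x) - ∫ x in torusBox, G x :=
  MeasureTheory.integral_sub (integOn hF) (integOn hG)

lemma setInt_cmul {F : ℝ × ℝ → ℝ} (c : ℝ) :
    ∫ x in torusBox, c * F x = c * ∫ x in torusBox, F x :=
  MeasureTheory.integral_const_mul c (fun x => F x)

lemma pd1_mul {f g : ℝ × ℝ → ℝ} (hf : Nice f) (hg : Nice g) (x : ℝ × ℝ) :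
    pd1 (fun y => f y * g y) x = f x * pd1 g x + pd1 f x * g x := by
  have := fderiv_fun_mul (𝕜 := ℝ) (hf.diff x) (hg.diff x)
  simp only [pd1, this]
  simp [mul_comm]

lemma pd2_mul {f g : ℝ × ℝ → ℝ} (hf : Nice f) (hg : Nice g) (x : ℝ × ℝ) :
    pd2 (fun y => f y * g y) x = f x * pd2 g x + pd2 f x * g x := by
  have := fderiv_fun_mul (𝕜 := ℝ) (hf.diff x) (hg.diff x)
  simp only [pd2, this]
  simp [mul_comm]

lemma ibp1 {f g : ℝ × ℝ → ℝ} (hf : Nice f) (hg : Nice g) :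
    ∫ x in torusBox, pd1 f x * g x = -∫ x in torusBox, f x * pd1 g x := by
  have h0 : ∫ x in torusBox, pd1 (fun y => f y * g y) x = 0 :=
    integral_pd1_eq_zero (hf.mul hg)
  have h1 : ∫ x in torusBox, pd1 (fun y => f y * g y) x
      = (∫ x in torusBox, f x * pd1 g x) + ∫ x in torusBox, pd1 f x * g x := by
    rw [show (fun x => pd1 (fun y => f y * g y) x) = fun x => f x * pd1 g x + pd1 f x * g x from
      funext (pd1_mul hf hg)]
    exact setInt_add (hf.continuous.mul hg.pd1.continuous) (hf.pd1.continuous.mul hg.continuous)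
  linarith [h0, h1]

lemma ibp2 {f g : ℝ × ℝ → ℝ} (hf : Nice f) (hg : Nice g) :
    ∫ x in torusBox, pd2 f x * g x = -∫ x in torusBox, f x * pd2 g x := by
  have h0 : ∫ x in torusBox, pd2 (fun y => f y * g y) x = 0 :=
    integral_pd2_eq_zero (hf.mul hg)
  have h1 : ∫ x in torusBox, pd2 (fun y => f y * g y) x
      = (∫ x in torusBox, f x * pd2 g x) + ∫ x in torusBox, pd2 f x * g x := by
    rw [show (fun x => pd2 (fun y => f y * g y) x) = fun x => f x * pd2 g x + pd2 f x * g x from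
      funext (pd2_mul hf hg)]
    exact setInt_add (hf.continuous.mul hg.pd2.continuous) (hf.pd2.continuous.mul hg.continuous)
  linarith [h0, h1]

lemma ibp_lap {f g : ℝ × ℝ → ℝ} (hf : Nice f) (hg : Nice g) :
    ∫ x in torusBox, lap f x * g x
      = -∫ x in torusBox, (pd1 f x * pd1 g x + pd2 f x * pd2 g x) := by
  have hsplit : ∫ x in torusBox, lap f x * g x
      = (∫ x in torusBox, pd1 (pd1 f) x * g x) + ∫ x in torusBox, pd2 (pd2 f) x * g x := by
    rw [show (fun x => lap f x * g x)
        = fun x => pd1 (pd1 f) x * g x + pd2 (pd2 f) x * g x from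
      funext fun x => by simp [lap]; ring]
    exact setInt_add (hf.pd1.pd1.continuous.mul hg.continuous)
      (hf.pd2.pd2.continuous.mul hg.continuous)
  rw [hsplit, ibp1 hf.pd1 hg, ibp2 hf.pd2 hg,
    setInt_add (hf.pd1.continuous.fun_mul hg.pd1.continuous)
      (hf.pd2.continuous.fun_mul hg.pd2.continuous)]
  ring

lemma lap_selfadjoint {f g : ℝ × ℝ → ℝ} (hf : Nice f) (hg : Nice g) :
    ∫ x in torusBox, lap f x * g x = ∫ x in torusBox, f x * lap g x := by
  rw [ibp_lap hf hg]
  have h1 : ∫ x in torusBox, pd1 f x * pd1 g x = -∫ x in torusBox, f x * pd1 (pd1 g) x :=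
    ibp1 hf hg.pd1
  have h2 : ∫ x in torusBox, pd2 f x * pd2 g x = -∫ x in torusBox, f x * pd2 (pd2 g) x :=
    ibp2 hf hg.pd2
  rw [setInt_add (hf.pd1.continuous.fun_mul hg.pd1.continuous)
    (hf.pd2.continuous.fun_mul hg.pd2.continuous), h1, h2]
  have h3 : ∫ x in torusBox, f x * lap g x
      = (∫ x in torusBox, f x * pd1 (pd1 g) x) + ∫ x in torusBox, f x * pd2 (pd2 g) x := by
    rw [show (fun x => f x * lap g x)
        = fun x => f x * pd1 (pd1 g) x + f x * pd2 (pd2 g) x from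
      funext fun x => by simp [lap]; ring]
    exact setInt_add (hf.continuous.mul hg.pd1.pd1.continuous)
      (hf.continuous.mul hg.pd2.pd2.continuous)
  rw [h3]
  ring

lemma volume_torusBox : (volume torusBox).toReal = (2 * Real.pi) * (2 * Real.pi) := by
  have h2 : (0:ℝ) ≤ 2 * Real.pi := by positivity
  rw [torusBox_prod, Measure.volume_eq_prod, Measure.prod_prod, Real.volume_Icc]
  simp [ENNReal.toReal_mul, ENNReal.toReal_ofReal h2, ENNReal.toReal_ofReal Real.pi_pos.le]

lemma zero_mem_BN (N : ℕ) : ((0, 0) : ℤ × ℤ) ∈ BN N := by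
  simp only [BN, Finset.mem_Icc]
  constructor <;> constructor <;> simp

lemma exists_phi {N : ℕ} {v : ℝ × ℝ → ℝ} (hv : IsTrigPoly N v)
    (hmean : ∫ x in torusBox, v x = 0) :
    ∃ φ : ℝ × ℝ → ℝ, Nice φ ∧ ∀ x, lap φ x = -(v x) := by
  obtain ⟨a, b, rfl⟩ := hv.exists_trg
  set a' : ℤ × ℤ → ℝ :=
    fun k => if k = (0,0) then 0 else a k / ((k.1:ℝ)^2 + (k.2:ℝ)^2) with ha'
  set b' : ℤ × ℤ → ℝ :=
    fun k => if k = (0,0) then 0 else b k / ((k.1:ℝ)^2 + (k.2:ℝ)^2) with hb'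
  refine ⟨trg N a' b', nice_trg N a' b', ?_⟩
  have hφ : Nice (trg N a' b') := nice_trg N a' b'
  have hkey : ∀ x, lap (trg N a' b') x + trg N a b x = a (0,0) := by
    intro x
    rw [lap_trg]
    unfold trg
    rw [← Finset.sum_add_distrib]
    rw [Finset.sum_eq_single ((0,0) : ℤ × ℤ)]
    · simp [cK, sK, a', b']
    · intro k _ hk
      have hk2 : ((k.1:ℝ)^2 + (k.2:ℝ)^2) ≠ 0 := by
        intro hcon
        apply hk
        have h1 : (k.1:ℝ) = 0 := by nlinarith [sq_nonneg (k.1:ℝ), sq_nonneg (k.2:ℝ)]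
        have h2 : (k.2:ℝ) = 0 := by nlinarith [sq_nonneg (k.1:ℝ), sq_nonneg (k.2:ℝ)]
        have : k.1 = 0 := by exact_mod_cast h1
        have : k.2 = 0 := by exact_mod_cast h2
        exact Prod.ext ‹k.1 = 0› ‹k.2 = 0›
      simp only [a', b', if_neg hk]
      field_simp
      ring
    · intro habs
      exact absurd (zero_mem_BN N) habs
  have hiconst : ∫ x in torusBox, (lap (trg N a' b') x + trg N a b x) = 0 := by
    rw [setInt_add hφ.lap.continuous (nice_trg N a b).continuous]
    have hlap0 : ∫ x in torusBox, lap (trg N a' b') x = 0 := by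
      have : (fun x => lap (trg N a' b') x)
          = fun x => pd1 (pd1 (trg N a' b')) x + pd2 (pd2 (trg N a' b')) x := rfl
      rw [this, setInt_add hφ.pd1.pd1.continuous hφ.pd2.pd2.continuous,
        integral_pd1_eq_zero hφ.pd1, integral_pd2_eq_zero hφ.pd2]
      ring
    rw [hlap0, hmean]
    ring
  have ha0 : a (0,0) = 0 := by
    have h1 : ∫ x in torusBox, (lap (trg N a' b') x + trg N a b x)
        = ∫ x in torusBox, (a (0,0) : ℝ) := by
      apply setIntegral_congr_fun (measurableSet_Icc)
      intro x _
      exact hkey x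
    rw [hiconst] at h1
    rw [setIntegral_const] at h1
    rw [smul_eq_mul] at h1
    have hpos : (0:ℝ) < (volume torusBox).toReal := by
      rw [volume_torusBox]; positivity
    have := h1.symm
    rcases mul_eq_zero.mp this with h | h
    · linarith [show volume.real torusBox = (volume torusBox).toReal from rfl]
    · exact h
  intro x
  have := hkey x
  rw [ha0] at this
  linarith

lemma ECH_split {u : ℝ × ℝ → ℝ} (hu : Nice u) (ν : ℝ) :
    ECH ν u = ν/2 * (∫ x in torusBox, ((pd1 u x)^2 + (pd2 u x)^2))
      + ∫ x in torusBox, (1/4) * ((u x)^2 - 1)^2 := by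
  unfold ECH
  rw [setInt_add (by exact (continuous_const.mul ((hu.pd1.continuous.pow 2).add
      (hu.pd2.continuous.pow 2))))
    (by exact (continuous_const.mul (((hu.continuous.pow 2).sub continuous_const).pow 2)))]
  rw [setInt_cmul]


set_option maxHeartbeats 1000000 in
/-- One-step energy estimate for the stabilized semi-implicit Fourier–Galerkin
scheme for Cahn–Hilliard:
`(u^{n+1}-u^n)/τ = -νΔ²u^{n+1} + AΔ(u^{n+1}-u^n) + ΔΠ_N f(u^n)`, `f(u)=u³-u`. -/
theorem CH_one_step_energy (ν τ A : ℝ) (hν : 0 < ν) (hτ : 0 < τ) (hA : 0 < A)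
    (N : ℕ) (un un1 w : ℝ × ℝ → ℝ)
    (hun : IsTrigPoly N un) (hun1 : IsTrigPoly N un1) (hw : IsTrigPoly N w)
    (hmean : ∫ x in torusBox, un x = 0) (hmean1 : ∫ x in torusBox, un1 x = 0)
    -- `w = Π_N f(u^n)`: `w` is the `L²` projection of `f(u^n) = (u^n)³ - u^n` onto `X_N`
    (hproj : ∀ v : ℝ × ℝ → ℝ, IsTrigPoly N v →
      ∫ x in torusBox, (w x - ((un x) ^ 3 - un x)) * v x = 0)
    -- the scheme
    (hscheme : ∀ x : ℝ × ℝ, (un1 x - un x) / τ =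
      -ν * lap (lap un1) x + A * lap (fun y => un1 y - un y) x + lap w x) :
    ECH ν un1 - ECH ν un +
        (A + 1 / 2 + Real.sqrt (2 * ν / τ)) * L2sq (fun x => un1 x - un x) ≤
      L2sq (fun x => un1 x - un x) *
        ((Linf un) ^ 2 + (1 / 2) * (Linf un1) ^ 2) := by
  have nun : Nice un := hun.nice
  have nun1 : Nice un1 := hun1.nice
  have nw : Nice w := hw.nice
  set v : ℝ × ℝ → ℝ := fun x => un1 x - un x with hvdef
  have hvtrig : IsTrigPoly N v := hun1.sub hun
  have nv : Nice v := hvtrig.nice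
  have hτ' : τ ≠ 0 := ne_of_gt hτ
  -- continuity shorthands
  have cun : Continuous un := nun.continuous
  have cun1 : Continuous un1 := nun1.continuous
  have cw : Continuous w := nw.continuous
  have cv : Continuous v := nv.continuous
  -- mean zero of v
  have hvmean : ∫ x in torusBox, v x = 0 := by
    have h := setInt_sub cun1 cun
    show ∫ x in torusBox, (un1 x - un x) = 0
    rw [h, hmean1, hmean]; ring
  obtain ⟨φ, nφ, hlapφ⟩ := exists_phi hvtrig hvmean
  have cφ : Continuous φ := nφ.continuous
  set μ : ℝ × ℝ → ℝ := fun y => -ν * lap un1 y + (A * v y + w y) with hμdef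
  have nμ : Nice μ := ((nun1.lap).const_mul (-ν)).add ((nv.const_mul A).add nw)
  have hlapμ : ∀ x, lap μ x = -ν * lap (lap un1) x + (A * lap v x + lap w x) := by
    intro x
    have h12 := congrFun (lap_add' ((nun1.lap).const_mul (-ν)) ((nv.const_mul A).add nw)) x
    have hc := congrFun (lap_const_mul' nun1.lap (-ν)) x
    have h34 := congrFun (lap_add' (nv.const_mul A) nw) x
    have hd := congrFun (lap_const_mul' nv A) x
    calc lap μ x = -ν * lap (lap un1) x + lap (fun y => A * v y + w y) x := by
          rw [← hc]; exact h12
      _ = -ν * lap (lap un1) x + (A * lap v x + lap w x) := by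
          rw [h34, hd]
  have hvτ : ∀ x, v x = τ * lap μ x := by
    intro x
    have hs := hscheme x
    rw [div_eq_iff hτ'] at hs
    rw [hlapμ x]
    show un1 x - un x = _
    linear_combination hs
  -- named integrals
  set Gφ := ∫ x in torusBox, ((pd1 φ x)^2 + (pd2 φ x)^2) with hGdef
  set D := ∫ x in torusBox, ((pd1 v x)^2 + (pd2 v x)^2) with hDdef
  set Q := ∫ x in torusBox, (v x)^2 with hQdef
  set N1 := ∫ x in torusBox, ((pd1 un1 x)^2 + (pd2 un1 x)^2) with hN1def
  set N0 := ∫ x in torusBox, ((pd1 un x)^2 + (pd2 un x)^2) with hN0def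
  set I1 := ∫ x in torusBox, (pd1 un1 x * pd1 v x + pd2 un1 x * pd2 v x) with hI1def
  set Fv := ∫ x in torusBox, ((un x)^3 - un x) * v x with hFvdef
  have hQL2 : L2sq v = Q := rfl
  -- step: ∫ v φ = τ ∫ (lap μ) φ
  have e1 : ∫ x in torusBox, v x * φ x = τ * ∫ x in torusBox, lap μ x * φ x := by
    rw [← setInt_cmul]
    refine setIntegral_congr_fun measurableSet_Icc fun x _ => ?_
    rw [hvτ x]; ring
  have e2 : ∫ x in torusBox, lap μ x * φ x = -∫ x in torusBox, μ x * v x := by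
    rw [lap_selfadjoint nμ nφ, ← MeasureTheory.integral_neg]
    refine setIntegral_congr_fun measurableSet_Icc fun x _ => ?_
    rw [hlapφ x]; ring
  have e3 : ∫ x in torusBox, v x * φ x = Gφ := by
    have h := ibp_lap nφ nφ
    have h2 : ∫ x in torusBox, v x * φ x = -∫ x in torusBox, lap φ x * φ x := by
      rw [← MeasureTheory.integral_neg]
      refine setIntegral_congr_fun measurableSet_Icc fun x _ => ?_
      rw [hlapφ x]; ring
    rw [h2, h, neg_neg, hGdef]
    refine setIntegral_congr_fun measurableSet_Icc fun x _ => ?_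
    ring
  -- expand ∫ μ v
  have e4 : ∫ x in torusBox, μ x * v x
      = -ν * (∫ x in torusBox, lap un1 x * v x) + (A * Q + ∫ x in torusBox, w x * v x) := by
    have hh : ∫ x in torusBox, μ x * v x
        = ∫ x in torusBox, (-ν * (lap un1 x * v x) + (A * (v x)^2 + w x * v x)) := by
      refine setIntegral_congr_fun measurableSet_Icc fun x _ => ?_
      show (-ν * lap un1 x + (A * v x + w x)) * v x = _
      ring
    rw [hh, setInt_add (continuous_const.fun_mul (nun1.lap.continuous.fun_mul cv))
      ((continuous_const.fun_mul (cv.fun_pow 2)).fun_add (cw.fun_mul cv)),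
      setInt_cmul,
      setInt_add (continuous_const.fun_mul (cv.fun_pow 2)) (cw.fun_mul cv), setInt_cmul]
  have e5 : ∫ x in torusBox, lap un1 x * v x = -I1 := by
    rw [ibp_lap nun1 nv, hI1def]
  have e6 : ∫ x in torusBox, w x * v x = Fv := by
    have h := hproj v hvtrig
    have hsplit : ∫ x in torusBox, (w x - ((un x)^3 - un x)) * v x
        = (∫ x in torusBox, w x * v x) - ∫ x in torusBox, ((un x)^3 - un x) * v x := by
      rw [← setInt_sub (cw.fun_mul cv) (((cun.fun_pow 3).fun_sub cun).fun_mul cv)]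
      refine setIntegral_congr_fun measurableSet_Icc fun x _ => ?_
      ring
    rw [hsplit] at h
    rw [hFvdef]
    linarith only [h]
  -- gradient identity
  have hpv1 : ∀ x, pd1 v x = pd1 un1 x - pd1 un x := fun x =>
    congrFun (pd1_sub' nun1 nun) x
  have hpv2 : ∀ x, pd2 v x = pd2 un1 x - pd2 un x := fun x =>
    congrFun (pd2_sub' nun1 nun) x
  have e7 : I1 = 1/2 * (N1 - N0 + D) := by
    have hh : I1 = ∫ x in torusBox,
        (1/2) * (((pd1 un1 x)^2 + (pd2 un1 x)^2) - ((pd1 un x)^2 + (pd2 un x)^2)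
          + ((pd1 v x)^2 + (pd2 v x)^2)) := by
      rw [hI1def]
      refine setIntegral_congr_fun measurableSet_Icc fun x _ => ?_
      rw [hpv1 x, hpv2 x]; ring
    rw [hh, setInt_cmul]
    congr 1
    rw [show (fun x => ((pd1 un1 x)^2 + (pd2 un1 x)^2) - ((pd1 un x)^2 + (pd2 un x)^2)
          + ((pd1 v x)^2 + (pd2 v x)^2))
        = fun x => (((pd1 un1 x)^2 + (pd2 un1 x)^2) - ((pd1 un x)^2 + (pd2 un x)^2))
          + ((pd1 v x)^2 + (pd2 v x)^2) from rfl]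
    rw [setInt_add (((nun1.pd1.continuous.fun_pow 2).fun_add (nun1.pd2.continuous.fun_pow 2)).fun_sub
        ((nun.pd1.continuous.fun_pow 2).fun_add (nun.pd2.continuous.fun_pow 2)))
      ((nv.pd1.continuous.fun_pow 2).fun_add (nv.pd2.continuous.fun_pow 2)),
      setInt_sub ((nun1.pd1.continuous.fun_pow 2).fun_add (nun1.pd2.continuous.fun_pow 2))
        ((nun.pd1.continuous.fun_pow 2).fun_add (nun.pd2.continuous.fun_pow 2))]
  -- energy split
  have e8  : ECH ν un1 = ν/2 * N1 + ∫ x in torusBox, (1/4) * ((un1 x)^2 - 1)^2 :=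
    ECH_split nun1 ν
  have e8' : ECH ν un  = ν/2 * N0 + ∫ x in torusBox, (1/4) * ((un x)^2 - 1)^2 :=
    ECH_split nun ν
  set M := (Linf un)^2 + (1/2) * (Linf un1)^2 with hMdef
  -- Taylor estimate
  have e9 : (∫ x in torusBox, (1/4) * ((un1 x)^2 - 1)^2)
      - (∫ x in torusBox, (1/4) * ((un x)^2 - 1)^2)
      ≤ Fv + (M - 1/2) * Q := by
    have hL : (∫ x in torusBox, (1/4) * ((un1 x)^2 - 1)^2)
        - (∫ x in torusBox, (1/4) * ((un x)^2 - 1)^2)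
        = ∫ x in torusBox, ((1/4) * ((un1 x)^2 - 1)^2 - (1/4) * ((un x)^2 - 1)^2) := by
      rw [setInt_sub (continuous_const.fun_mul (((cun1.fun_pow 2).fun_sub continuous_const).fun_pow 2))
        (continuous_const.fun_mul (((cun.fun_pow 2).fun_sub continuous_const).fun_pow 2))]
    have hR : Fv + (M - 1/2) * Q
        = ∫ x in torusBox, (((un x)^3 - un x) * v x + (M - 1/2) * (v x)^2) := by
      rw [setInt_add ((((cun.fun_pow 3).fun_sub cun)).fun_mul cv) (continuous_const.fun_mul (cv.fun_pow 2)),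
        setInt_cmul, hFvdef]
    rw [hL, hR]
    refine setIntegral_mono_on
      (integOn ((continuous_const.mul (((cun1.pow 2).sub continuous_const).pow 2)).sub
        (continuous_const.mul (((cun.pow 2).sub continuous_const).pow 2))))
      (integOn (((((cun.pow 3).sub cun)).mul cv).add (continuous_const.mul (cv.pow 2))))
      measurableSet_Icc fun x _ => ?_
    have ha := hun.abs_le_Linf x
    have hb := hun1.abs_le_Linf x
    have ha2 : (un x)^2 ≤ (Linf un)^2 := sq_le_sq' (neg_le_of_abs_le ha) (le_of_abs_le ha)
    have hb2 : (un1 x)^2 ≤ (Linf un1)^2 := sq_le_sq' (neg_le_of_abs_le hb) (le_of_abs_le hb)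
    have hvx : v x = un1 x - un x := rfl
    rw [hvx, hMdef]
    have t1 : 0 ≤ (un1 x - un x)^2 * ((Linf un)^2 - (un x)^2) :=
      mul_nonneg (sq_nonneg _) (sub_nonneg.2 ha2)
    have t2 : 0 ≤ (un1 x - un x)^2 * ((Linf un1)^2 - (un1 x)^2) :=
      mul_nonneg (sq_nonneg _) (sub_nonneg.2 hb2)
    have t3 : 0 ≤ ((un1 x - un x)^2)^2 := sq_nonneg _
    linarith only [t1, t2, t3]
  -- spectral/Young inequality
  set c := Real.sqrt (2 * ν / τ) with hcdef
  set ε := Real.sqrt (ν * τ / 2) with hεdef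
  have hc0 : 0 ≤ c := Real.sqrt_nonneg _
  have hε : 0 < ε := Real.sqrt_pos.2 (by positivity)
  have hε2 : ε^2 = ν * τ / 2 := Real.sq_sqrt (by positivity)
  have hcε : c * ε = ν := by
    rw [hcdef, hεdef, ← Real.sqrt_mul (by positivity)]
    rw [show (2 * ν / τ) * (ν * τ / 2) = ν^2 by field_simp]
    exact Real.sqrt_sq hν.le
  have eQ : Q = ∫ x in torusBox, (pd1 φ x * pd1 v x + pd2 φ x * pd2 v x) := by
    have h2 : Q = -∫ x in torusBox, lap φ x * v x := by
      rw [hQdef, ← MeasureTheory.integral_neg]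
      refine setIntegral_congr_fun measurableSet_Icc fun x _ => ?_
      rw [hlapφ x]; ring
    rw [h2, ibp_lap nφ nv, neg_neg]
  have young : (∫ x in torusBox, (pd1 φ x * pd1 v x + pd2 φ x * pd2 v x))
      ≤ (1/(2*ε)) * Gφ + (ε/2) * D := by
    have hR : (1/(2*ε)) * Gφ + (ε/2) * D
        = ∫ x in torusBox, ((1/(2*ε)) * ((pd1 φ x)^2 + (pd2 φ x)^2)
          + (ε/2) * ((pd1 v x)^2 + (pd2 v x)^2)) := by
      rw [setInt_add (continuous_const.fun_mul ((nφ.pd1.continuous.fun_pow 2).fun_add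
          (nφ.pd2.continuous.fun_pow 2)))
        (continuous_const.fun_mul ((nv.pd1.continuous.fun_pow 2).fun_add (nv.pd2.continuous.fun_pow 2))),
        setInt_cmul, setInt_cmul]
    rw [hR]
    refine setIntegral_mono_on
      (integOn ((nφ.pd1.continuous.mul nv.pd1.continuous).add
        (nφ.pd2.continuous.mul nv.pd2.continuous)))
      (integOn ((continuous_const.mul ((nφ.pd1.continuous.pow 2).add
          (nφ.pd2.continuous.pow 2))).add
        (continuous_const.mul ((nv.pd1.continuous.pow 2).add (nv.pd2.continuous.pow 2)))))
      measurableSet_Icc fun x _ => ?_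
    have key : 2*ε*(pd1 φ x * pd1 v x + pd2 φ x * pd2 v x)
        ≤ ((pd1 φ x)^2 + (pd2 φ x)^2) + ε^2 * ((pd1 v x)^2 + (pd2 v x)^2) := by
      nlinarith only [sq_nonneg (pd1 φ x - ε * pd1 v x), sq_nonneg (pd2 φ x - ε * pd2 v x)]
    have h2ε : (0:ℝ) < 2*ε := by linarith only [hε]
    rw [show (1/(2*ε)) * ((pd1 φ x)^2 + (pd2 φ x)^2) + (ε/2) * ((pd1 v x)^2 + (pd2 v x)^2)
        = (((pd1 φ x)^2 + (pd2 φ x)^2) + ε^2 * ((pd1 v x)^2 + (pd2 v x)^2)) / (2*ε) from by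
      field_simp]
    rw [le_div_iff₀ h2ε]
    linarith only [key]
  have spec : c * Q ≤ (1/τ) * Gφ + (ν/2) * D := by
    have h1 : c * Q ≤ c * ((1/(2*ε)) * Gφ + (ε/2) * D) := by
      apply mul_le_mul_of_nonneg_left _ hc0
      rw [eQ]; exact young
    have hcτ : c * τ = 2 * ε := by
      have h3 : (c * τ) * ε = (2 * ε) * ε := by
        have h4 : ν * τ = 2 * ε^2 := by rw [hε2]; ring
        calc (c * τ) * ε = (c * ε) * τ := by ring
          _ = ν * τ := by rw [hcε]
          _ = 2 * ε^2 := h4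
          _ = (2 * ε) * ε := by ring
      exact mul_right_cancel₀ (ne_of_gt hε) h3
    have s1 : c * (1/(2*ε)) = 1/τ := by
      rw [mul_one_div, div_eq_div_iff (ne_of_gt (by positivity : (0:ℝ) < 2*ε)) hτ']
      linear_combination hcτ
    have s2 : c * (ε/2) = ν/2 := by linear_combination hcε / 2
    have h2 : c * ((1/(2*ε)) * Gφ + (ε/2) * D) = (1/τ) * Gφ + (ν/2) * D := by
      linear_combination Gφ * s1 + D * s2
    linarith only [h1, h2.le, h2.ge]
  -- scheme identity: ν I1 + A Q + Fv = -(1/τ) Gφ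
  have escheme : ν * I1 + A * Q + Fv = -(1/τ) * Gφ := by
    have h1 : Gφ = τ * (-(∫ x in torusBox, μ x * v x)) := by rw [← e2, ← e1, e3]
    have h2 : ∫ x in torusBox, μ x * v x = ν * I1 + A * Q + Fv := by
      rw [e4, e5, e6]; ring
    rw [h2] at h1
    rw [h1]; field_simp
  -- final assembly
  rw [hQL2]
  have goal2 : ECH ν un1 - ECH ν un + (A + 1/2 + c) * Q ≤ Q * M := by
    have hτinv : (1/τ) * Gφ = -(ν * I1 + A * Q + Fv) := by
      rw [escheme]; ring
    rw [e8, e8']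
    have hI1' : ν * I1 = ν/2 * (N1 - N0) + ν/2 * D := by rw [e7]; ring
    linarith only [e9, spec, hτinv, hI1']
  exact goal2

end
end
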